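/- arXiv:2510.02188 — 6 statements merged into one kernel-verified Lean document; each statement's English description precedes it below -/
import Mathlib

section
/- For an irrational number α with convergent denominators q_k and δ_k := ‖q_k α‖, one has the identity δ_k = Σ_{t=1}^∞ a_{k+2t} δ_{k+2t-1}, where a_i are the partial quotients of α. -/
open Finset Filter Topology

private def pAux (a : ℕ → ℕ) : ℕ → ℤ
  | 0 => 0
  | 1 => 1
  | (n+2) => a (n+2) * pAux a (n+1) + pAux a n

private lemma round_eq_of_abs_lt_half {x : ℝ} {m : ℤ} (h : |x - m| < 1/2) :
    round x = m := by
  rw [round_eq, Int.floor_eq_iff]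
  rw [abs_lt] at h
  constructor <;> push_cast <;> [linarith; linarith]


/-- For irrational α with partial quotients `a`, convergent
denominators `q` and `δ k = ‖q k • α‖`, one has
`δ k = ∑_{t=1}^∞ a (k + 2t) * δ (k + 2t - 1)` (for `k ≥ 1`), stated here as a
`HasSum` over `t' = t - 1 : ℕ`. -/
theorem stmt1
    (α : ℝ) (hirr : Irrational α) (hα : α ∈ Set.Ioo (0 : ℝ) 1)
    (t : ℕ → ℝ) (a q : ℕ → ℕ) (δ : ℕ → ℝ)
    (ht1 : t 1 = 1 / α)
    (hta : ∀ i, 1 ≤ i → (a i : ℤ) = ⌊t i⌋)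
    (htrec : ∀ i, 1 ≤ i → t (i + 1) = 1 / (t i - (a i : ℝ)))
    (hq0 : q 0 = 1) (hq1 : q 1 = a 1)
    (hqrec : ∀ i, 1 ≤ i → q (i + 1) = a (i + 1) * q i + q (i - 1))
    (hδ : ∀ i, δ i = |(q i : ℝ) * α - ((round ((q i : ℝ) * α) : ℤ) : ℝ)|) :
    ∀ k, 1 ≤ k →
      HasSum (fun t' : ℕ => (a (k + 2 * t' + 2) : ℝ) * δ (k + 2 * t' + 1)) (δ k) := by
  obtain ⟨hα0, hα1⟩ := hα
  have hαne : α ≠ 0 := ne_of_gt hα0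
  -- t i is irrational and > 1 for i ≥ 1
  have hT : ∀ i, 1 ≤ i → Irrational (t i) ∧ 1 < t i := by
    intro i hi
    induction i with
    | zero => omega
    | succ n ih =>
      rcases Nat.lt_or_ge n 1 with hn | hn
      · interval_cases n
        refine ⟨?_, ?_⟩
        · rw [ht1, one_div]; exact hirr.inv
        · rw [ht1]; exact one_lt_one_div hα0 hα1
      · obtain ⟨hTi, hti⟩ := ih hn
        have hfl : ((a n : ℝ)) = (⌊t n⌋ : ℝ) := by exact_mod_cast hta n hn
        have hfr : t n - (a n : ℝ) = Int.fract (t n) := by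
          rw [Int.fract, hfl]
        have hfr0 : 0 < t n - (a n : ℝ) := by
          rw [hfr]
          exact Int.fract_pos.2 fun h => (hTi.ne_int ⌊t n⌋) h
        have hfr1 : t n - (a n : ℝ) < 1 := by rw [hfr]; exact Int.fract_lt_one _
        have hIrr : Irrational (t n - (a n : ℝ)) := by
          rw [hfr, Int.fract]; exact hTi.sub_intCast _
        refine ⟨?_, ?_⟩
        · rw [htrec n hn, one_div]; exact hIrr.inv
        · rw [htrec n hn]; exact one_lt_one_div hfr0 hfr1
  have hfr : ∀ i, 1 ≤ i → 0 < t i - (a i : ℝ) ∧ t i - (a i : ℝ) < 1 := by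
    intro i hi
    obtain ⟨hTi, hti⟩ := hT i hi
    have hfl : ((a i : ℝ)) = (⌊t i⌋ : ℝ) := by exact_mod_cast hta i hi
    have hfr' : t i - (a i : ℝ) = Int.fract (t i) := by
      rw [Int.fract, hfl]
    rw [hfr']
    exact ⟨(Int.fract_pos).2 fun h => (hTi.ne_int ⌊t i⌋) h, Int.fract_lt_one _⟩
  have ha1 : ∀ i, 1 ≤ i → (1 : ℝ) ≤ (a i : ℝ) := by
    intro i hi
    obtain ⟨hTi, hti⟩ := hT i hi
    have h1 : (1 : ℤ) ≤ ⌊t i⌋ := Int.le_floor.2 (by exact_mod_cast hti.le)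
    rw [← hta i hi] at h1
    exact_mod_cast h1
  -- product of two consecutive t's exceeds 2
  have htt : ∀ i, 1 ≤ i → 2 < t i * t (i + 1) := by
    intro i hi
    obtain ⟨h0, h1⟩ := hfr i hi
    obtain ⟨_, hti⟩ := hT i hi
    have hai := ha1 i hi
    have hub : t i < 2 * (a i : ℝ) := by
      have : (t i : ℝ) < (a i : ℝ) + 1 := by
        have h2 := Int.lt_floor_add_one (t i)
        have hfl : ((a i : ℝ)) = (⌊t i⌋ : ℝ) := by exact_mod_cast hta i hi
        rw [hfl]; exact h2
      linarith
    rw [htrec i hi]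
    rw [mul_one_div, lt_div_iff₀ h0]
    linarith
  -- the product function P
  set P : ℕ → ℝ := fun m => ∏ i ∈ Finset.range m, t (i + 1) with hPdef
  have hPs : ∀ m, P (m + 1) = P m * t (m + 1) := fun m => Finset.prod_range_succ _ m
  have hP1le : ∀ m, (1 : ℝ) ≤ P m := by
    intro m
    induction m with
    | zero => simp [hPdef]
    | succ n ih => rw [hPs n]; nlinarith [(hT (n + 1) (by omega)).2]
  have hPpos : ∀ m, (0 : ℝ) < P m := fun m => lt_of_lt_of_le one_pos (hP1le m)
  have hPne : ∀ m, P m ≠ 0 := fun m => ne_of_gt (hPpos m)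
  have hP2 : ∀ m, 2 * P m < P (m + 2) := by
    intro m
    have h := htt (m + 1) (by omega)
    have := hPpos m
    calc 2 * P m < (t (m+1) * t (m+2)) * P m := by nlinarith
    _ = P (m + 2) := by rw [hPs (m+1), hPs m]; ring
  -- the key unsigned identity
  have hPid2 : ∀ n : ℕ, 1 / P (n + 1) = (a (n + 2) : ℝ) / P (n + 2) + 1 / P (n + 3) := by
    intro n
    have hkey : t (n + 3) * (t (n + 2) - (a (n + 2) : ℝ)) = 1 := by
      have h0 := (hfr (n + 2) (by omega)).1
      rw [htrec (n + 2) (by omega)]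
      field_simp
    rw [hPs (n + 2), hPs (n + 1)]
    have e1 : t (n+1+1) = t (n+2) := rfl
    have e2 : t (n+2+1) = t (n+3) := rfl
    rw [e1, e2]
    have h1 := hPne (n + 1)
    have h2 : t (n + 2) ≠ 0 := ne_of_gt (lt_trans one_pos (hT (n+2) (by omega)).2)
    have h3 : t (n + 3) ≠ 0 := ne_of_gt (lt_trans one_pos (hT (n+3) (by omega)).2)
    field_simp
    linear_combination hkey
  -- main error formula
  have he : ∀ m, (q m : ℝ) * α - ((pAux a m : ℤ) : ℝ) = (-1) ^ m / P (m + 1) := by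
    intro m
    induction m using Nat.twoStepInduction with
    | zero =>
      simp only [hq0, pAux, Nat.cast_one, Int.cast_zero, pow_zero]
      have : P 1 = t 1 := by rw [hPs 0]; simp [hPdef]
      rw [this, ht1]
      field_simp
      simp
    | one =>
      simp only [hq1, pAux, Int.cast_one, pow_one]
      have hP2v : P 2 = t 1 * t 2 := by
        rw [hPs 1, hPs 0]; simp [hPdef]
      have ht2 : t 2 = 1 / (t 1 - (a 1 : ℝ)) := htrec 1 le_rfl
      have h0 : (0:ℝ) < t 1 - (a 1 : ℝ) := (hfr 1 le_rfl).1
      rw [hP2v, ht2, ht1]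
      have h1 : (1:ℝ)/α - (a 1 : ℝ) ≠ 0 := by rw [← ht1]; exact ne_of_gt (ht1 ▸ h0)
      field_simp
      ring
    | more n ih1 ih2 =>
      have hq' : (q (n + 2) : ℝ) = (a (n + 2) : ℝ) * q (n + 1) + q n := by
        have := hqrec (n + 1) (by omega)
        simp only [Nat.add_sub_cancel] at this
        exact_mod_cast this
      have hp' : ((pAux a (n + 2) : ℤ) : ℝ) = (a (n + 2) : ℝ) * (pAux a (n + 1) : ℤ) + (pAux a n : ℤ) := by
        show ((pAux a (n+2) : ℤ) : ℝ) = _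
        rw [pAux]
        push_cast
        ring
      rw [hq', hp']
      have hid := hPid2 n
      have r1 : P (n+1+1) = P (n+2) := rfl
      have r2 : P (n+2+1) = P (n+3) := rfl
      rw [r1] at ih2
      rw [r2]
      have hs2 : (-1:ℝ)^(n+2) = (-1)^n := by rw [pow_succ, pow_succ]; ring
      have hs1 : (-1:ℝ)^(n+1) = -(-1)^n := by rw [pow_succ]; ring
      rw [hs2]
      rw [hs1] at ih2
      linear_combination (a (n+2) : ℝ) * ih2 + ih1 + (-1:ℝ)^n * hid
  -- δ equals 1 / P for indices ≥ 1
  have hδP : ∀ m, 1 ≤ m → δ m = 1 / P (m + 1) := by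
    intro m hm
    obtain ⟨j, rfl⟩ : ∃ j, m = j + 1 := ⟨m - 1, by omega⟩
    have h2lt : (2:ℝ) < P (j + 2) := lt_of_le_of_lt (by linarith [hP1le j]) (hP2 j)
    have habs : |(q (j+1) : ℝ) * α - ((pAux a (j+1) : ℤ) : ℝ)| = 1 / P (j + 2) := by
      rw [he (j+1)]
      rw [abs_div, abs_pow, abs_neg, abs_one, one_pow, abs_of_pos (hPpos (j+2))]
    have hlt : |(q (j+1) : ℝ) * α - ((pAux a (j+1) : ℤ) : ℝ)| < 1 / 2 := by
      rw [habs]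
      rw [div_lt_div_iff₀ (hPpos (j+2)) (by norm_num)]
      linarith
    have hround := round_eq_of_abs_lt_half hlt
    rw [hδ (j+1), hround, habs]
  -- the recurrence for δ
  have hδrec : ∀ m, 1 ≤ m → δ m = (a (m + 2) : ℝ) * δ (m + 1) + δ (m + 2) := by
    intro m hm
    rw [hδP m hm, hδP (m+1) (by omega), hδP (m+2) (by omega)]
    rw [hPid2 m]
    ring
  have hδnn : ∀ m, 0 ≤ δ m := fun m => by rw [hδ m]; positivity
  intro k hk
  -- partial sums telescope
  have hpart : ∀ T, ∑ t' ∈ Finset.range T, (a (k + 2 * t' + 2) : ℝ) * δ (k + 2 * t' + 1)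
      = δ k - δ (k + 2 * T) := by
    intro T
    induction T with
    | zero => simp
    | succ T ih =>
      rw [Finset.sum_range_succ, ih]
      have hrec := hδrec (k + 2 * T) (by omega)
      have e1 : k + 2 * (T + 1) = k + 2 * T + 2 := by ring
      have e2 : k + 2 * T + 1 + 1 = k + 2 * T + 2 := by ring
      rw [e1]
      have e3 : k + 2 * T + 1 = k + 2 * T + 1 := rfl
      linarith [hrec]
  -- δ (k + 2T) ≤ (1/2)^T * δ k
  have hhalf2 : ∀ m, 1 ≤ m → δ (m + 2) ≤ (1/2) * δ m := by
    intro m hm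
    rw [hδP m hm, hδP (m+2) (by omega)]
    have h := hP2 (m + 1)
    have h1 := hPpos (m + 1)
    have h3 := hPpos (m + 3)
    rw [show (1:ℝ)/2 * (1/P (m+1)) = 1/(2 * P (m+1)) by field_simp]
    exact one_div_le_one_div_of_le (by linarith) (by linarith)
  have hgeo : ∀ T, δ (k + 2 * T) ≤ (1/2 : ℝ) ^ T * δ k := by
    intro T
    induction T with
    | zero => simp
    | succ T ih =>
      have e1 : k + 2 * (T + 1) = (k + 2 * T) + 2 := by ring
      rw [e1]
      calc δ ((k + 2*T) + 2) ≤ (1/2) * δ (k + 2*T) := hhalf2 _ (by omega)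
        _ ≤ (1/2) * ((1/2)^T * δ k) := by linarith [ih]
        _ = (1/2:ℝ)^(T+1) * δ k := by rw [pow_succ]; ring
  have hzero : Tendsto (fun T : ℕ => δ (k + 2 * T)) atTop (𝓝 0) := by
    have hg : Tendsto (fun T : ℕ => (1/2 : ℝ) ^ T * δ k) atTop (𝓝 0) := by
      have := (tendsto_pow_atTop_nhds_zero_of_lt_one (by norm_num : (0:ℝ) ≤ 1/2)
        (by norm_num : (1/2:ℝ) < 1)).mul_const (δ k)
      simpa using this
    exact squeeze_zero (fun T => hδnn _) (fun T => hgeo T) hg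
  rw [hasSum_iff_tendsto_nat_of_nonneg
    (fun i => mul_nonneg (Nat.cast_nonneg _) (hδnn _))]
  rw [tendsto_congr hpart]
  simpa using tendsto_const_nhds.sub hzero
end

section
/- Let (x_n)_{A ≤ n ≤ B} be a finite sequence of reals with |x_n| < 1/2 and |x_n| < c/n for some c > 0 and all n, where A ≥ 2. Then ∏_{n=A}^{B} (1 - x_n) ≥ 1 - (|Σ_{n=A}^B x_n| + c²/(A-1)). -/
open Finset Real

lemma key_exp (x : ℝ) (h : |x| ≤ 1 / 2) : Real.exp (-(x + x ^ 2)) ≤ 1 - x := by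
  have h1 : -(1/2) ≤ x := neg_le_of_abs_le h
  have h2 : x ≤ 1/2 := le_of_abs_le h
  have hx1 : (0:ℝ) < 1 - x := by linarith
  rw [Real.exp_neg, inv_le_comm₀ (Real.exp_pos _) hx1]
  rcases le_or_gt x 0 with hx | hx
  · have := Real.add_one_le_exp (x + x ^ 2)
    have hpos : (0:ℝ) ≤ 1 + x + x ^ 2 := by nlinarith
    calc (1 - x)⁻¹ ≤ 1 + x + x ^ 2 := by
          rw [inv_le_iff_one_le_mul₀ hx1]
          nlinarith
      _ ≤ Real.exp (x + x ^ 2) := by linarith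
  · have ht : 0 ≤ x + x ^ 2 := by nlinarith
    have := Real.quadratic_le_exp_of_nonneg ht
    calc (1 - x)⁻¹ ≤ 1 + (x + x ^ 2) + (x + x ^ 2) ^ 2 / 2 := by
          rw [inv_le_iff_one_le_mul₀ hx1]
          nlinarith
      _ ≤ Real.exp (x + x ^ 2) := this

lemma sum_inv_sq_le (A B : ℕ) (hA : 2 ≤ A) (hAB : A ≤ B) :
    ∑ n ∈ Finset.Icc A B, (1:ℝ) / (n:ℝ) ^ 2 ≤ 1 / ((A:ℝ) - 1) - 1 / B := by
  induction B, hAB using Nat.le_induction with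
  | base =>
    rw [Finset.Icc_self, Finset.sum_singleton]
    have hA1 : (1:ℝ) ≤ (A:ℝ) - 1 := by
      have : (2:ℝ) ≤ (A:ℝ) := by exact_mod_cast hA
      linarith
    have hA0 : (0:ℝ) < (A:ℝ) := by linarith
    rw [div_sub_div _ _ (by linarith) (by positivity), div_le_div_iff₀ (by positivity) (by positivity)]
    ring_nf
    nlinarith
  | succ B hB ih =>
    rw [Finset.sum_Icc_succ_top (by omega)]
    have hB0 : (0:ℝ) < (B:ℝ) := by
      have : (2:ℝ) ≤ (B:ℝ) := by exact_mod_cast hA.trans hB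
      linarith
    have hB1 : ((B:ℝ) + 1) > 0 := by linarith
    have key : (1:ℝ) / ((B:ℕ)+1:ℝ) ^ 2 ≤ 1 / B - 1 / ((B:ℝ)+1) := by
      rw [div_sub_div _ _ (ne_of_gt hB0) (ne_of_gt hB1), div_le_div_iff₀ (by positivity) (by positivity)]
      push_cast
      nlinarith
    push_cast at *
    linarith

/-- If `|x n| < 1/2` and `|x n| < c/n` for `A ≤ n ≤ B` with
`2 ≤ A`, then `∏_{n=A}^B (1 - x n) ≥ 1 - (|∑_{n=A}^B x n| + c²/(A-1))`. -/
theorem stmt4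
    (A B : ℕ) (hA : 2 ≤ A) (hAB : A ≤ B)
    (c : ℝ) (hc : 0 < c) (x : ℕ → ℝ)
    (hx1 : ∀ n, A ≤ n → n ≤ B → |x n| < 1 / 2)
    (hx2 : ∀ n, A ≤ n → n ≤ B → |x n| < c / n) :
    ∏ n ∈ Finset.Icc A B, (1 - x n)
      ≥ 1 - (|∑ n ∈ Finset.Icc A B, x n| + c ^ 2 / ((A : ℝ) - 1)) := by
  have hmem : ∀ n ∈ Finset.Icc A B, A ≤ n ∧ n ≤ B := fun n hn => Finset.mem_Icc.mp hn
  -- step 1: product ≥ exp of sum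
  have step1 : ∏ n ∈ Finset.Icc A B, (1 - x n)
      ≥ ∏ n ∈ Finset.Icc A B, Real.exp (-(x n + (x n) ^ 2)) := by
    apply Finset.prod_le_prod
    · intro n _; exact (Real.exp_pos _).le
    · intro n hn
      obtain ⟨h1, h2⟩ := hmem n hn
      exact key_exp (x n) (hx1 n h1 h2).le
  rw [← Real.exp_sum] at step1
  have step2 : Real.exp (∑ n ∈ Finset.Icc A B, -(x n + (x n) ^ 2))
      ≥ 1 + ∑ n ∈ Finset.Icc A B, -(x n + (x n) ^ 2) := by
    have := Real.add_one_le_exp (∑ n ∈ Finset.Icc A B, -(x n + (x n) ^ 2))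
    linarith
  have hsum : ∑ n ∈ Finset.Icc A B, -(x n + (x n) ^ 2)
      = -(∑ n ∈ Finset.Icc A B, x n) - ∑ n ∈ Finset.Icc A B, (x n) ^ 2 := by
    rw [Finset.sum_neg_distrib, Finset.sum_add_distrib]; ring
  -- bound sum of squares
  have hsq : ∑ n ∈ Finset.Icc A B, (x n) ^ 2 ≤ c ^ 2 / ((A:ℝ) - 1) := by
    have h1 : ∑ n ∈ Finset.Icc A B, (x n) ^ 2
        ≤ ∑ n ∈ Finset.Icc A B, c ^ 2 * ((1:ℝ) / (n:ℝ) ^ 2) := by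
      apply Finset.sum_le_sum
      intro n hn
      obtain ⟨ha, hb⟩ := hmem n hn
      have hn0 : (0:ℝ) < (n:ℝ) := by
        have : (2:ℕ) ≤ n := hA.trans ha
        exact_mod_cast Nat.lt_of_lt_of_le (by norm_num) this
      have h := (hx2 n ha hb).le
      have habs : |x n| ^ 2 ≤ (c / n) ^ 2 := by
        apply pow_le_pow_left₀ (abs_nonneg _) h
      rw [sq_abs] at habs
      calc (x n) ^ 2 ≤ (c / n) ^ 2 := habs
        _ = c ^ 2 * (1 / (n:ℝ) ^ 2) := by field_simp
    rw [← Finset.mul_sum] at h1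
    have h2 := sum_inv_sq_le A B hA hAB
    have hB0 : (0:ℝ) < (B:ℝ) := by
      have : (2:ℕ) ≤ B := hA.trans hAB
      exact_mod_cast Nat.lt_of_lt_of_le (by norm_num) this
    have hc2 : (0:ℝ) ≤ c ^ 2 := sq_nonneg c
    have h3 : c ^ 2 * ∑ n ∈ Finset.Icc A B, (1:ℝ) / (n:ℝ) ^ 2
        ≤ c ^ 2 * (1 / ((A:ℝ) - 1)) := by
      apply mul_le_mul_of_nonneg_left _ hc2
      have : (0:ℝ) < 1 / (B:ℝ) := by positivity
      linarith
    calc ∑ n ∈ Finset.Icc A B, (x n) ^ 2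
        ≤ c ^ 2 * ∑ n ∈ Finset.Icc A B, (1:ℝ) / (n:ℝ) ^ 2 := h1
      _ ≤ c ^ 2 * (1 / ((A:ℝ) - 1)) := h3
      _ = c ^ 2 / ((A:ℝ) - 1) := by ring
  have habs : -(∑ n ∈ Finset.Icc A B, x n) ≥ -|∑ n ∈ Finset.Icc A B, x n| :=
    neg_le_neg (le_abs_self _)
  rw [hsum] at step1 step2
  linarith
end

section
/- Let α be irrational and let N have Ostrowski expansion N = Σ_{i=0}^{ℓ-1} b_i q_i with respect to α (with q_{ℓ-1} ≤ N < q_ℓ). Then the Sudler product factorizes as P_N(α) = ∏_{i=0}^{ℓ-1} ∏_{s=0}^{b_i-1} P_{q_i}(α, ε_{i,s}(N)), where ε_{i,s}(N) = q_i ( s δ_i + Σ_{j=1}^{ℓ-i-1} (-1)^j b_{i+j} δ_{i+j} ), δ_i = ‖q_i α‖, and P_{q_i}(α, ε) = ∏_{n=1}^{q_i} |2 sin(π(nα + (-1)^i ε / q_i))|. -/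
open Finset

private def paux (a : ℕ → ℕ) : ℕ → ℤ
  | 0 => 0
  | 1 => 1
  | (n+2) => a (n+2) * paux a (n+1) + paux a n

section Aux

variable (α : ℝ) (t : ℕ → ℝ) (a q : ℕ → ℕ)

private lemma tfacts (hirr : Irrational α) (hα : α ∈ Set.Ioo (0:ℝ) 1)
    (ht1 : t 1 = 1 / α)
    (hta : ∀ i, 1 ≤ i → (a i : ℤ) = ⌊t i⌋)
    (htrec : ∀ i, 1 ≤ i → t (i + 1) = 1 / (t i - (a i : ℝ))) :
    ∀ i, 1 ≤ i → Irrational (t i) ∧ 1 < t i := by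
  intro i hi
  induction i, hi using Nat.le_induction with
  | base =>
    rw [ht1, one_div]
    exact ⟨hirr.inv, one_lt_inv_iff₀.mpr ⟨hα.1, hα.2⟩⟩
  | succ i hi ih =>
    obtain ⟨hirr_i, hlt_i⟩ := ih
    have hfl : ((a i : ℕ) : ℝ) = ((⌊t i⌋ : ℤ) : ℝ) := by exact_mod_cast (hta i hi)
    have hfr : t i - (a i : ℝ) = Int.fract (t i) := by
      rw [hfl]; rw [Int.fract]
    have hfr0 : 0 < t i - (a i : ℝ) := by
      rw [hfr]; exact (Int.fract_pos).mpr (by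
        intro h; exact hirr_i.ne_int ⌊t i⌋ h)
    have hfr1 : t i - (a i : ℝ) < 1 := by rw [hfr]; exact Int.fract_lt_one _
    rw [htrec i hi, one_div]
    constructor
    · have := (hirr_i.sub_natCast (a i)).inv
      convert this using 3
    · exact one_lt_inv_iff₀.mpr ⟨hfr0, hfr1⟩

private lemma fract_facts (hirr : Irrational α) (hα : α ∈ Set.Ioo (0:ℝ) 1)
    (ht1 : t 1 = 1 / α)
    (hta : ∀ i, 1 ≤ i → (a i : ℤ) = ⌊t i⌋)
    (htrec : ∀ i, 1 ≤ i → t (i + 1) = 1 / (t i - (a i : ℝ))) :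
    ∀ i, 1 ≤ i → 0 < t i - (a i : ℝ) ∧ t i - (a i : ℝ) < 1 := by
  intro i hi
  obtain ⟨hirr_i, hlt_i⟩ := tfacts α t a hirr hα ht1 hta htrec i hi
  have hfl : ((a i : ℕ) : ℝ) = ((⌊t i⌋ : ℤ) : ℝ) := by exact_mod_cast (hta i hi)
  have hfr : t i - (a i : ℝ) = Int.fract (t i) := by rw [hfl]; rw [Int.fract]
  rw [hfr]
  exact ⟨Int.fract_pos.mpr (fun h => hirr_i.ne_int ⌊t i⌋ h), Int.fract_lt_one _⟩

private lemma a_pos (hirr : Irrational α) (hα : α ∈ Set.Ioo (0:ℝ) 1)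
    (ht1 : t 1 = 1 / α)
    (hta : ∀ i, 1 ≤ i → (a i : ℤ) = ⌊t i⌋)
    (htrec : ∀ i, 1 ≤ i → t (i + 1) = 1 / (t i - (a i : ℝ))) :
    ∀ i, 1 ≤ i → 1 ≤ a i := by
  intro i hi
  obtain ⟨_, hlt_i⟩ := tfacts α t a hirr hα ht1 hta htrec i hi
  have : (1 : ℤ) ≤ ⌊t i⌋ := Int.le_floor.mpr (by exact_mod_cast hlt_i.le)
  have h2 := hta i hi
  omega

private lemma beta_id (hirr : Irrational α) (hα : α ∈ Set.Ioo (0:ℝ) 1)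
    (ht1 : t 1 = 1 / α)
    (hta : ∀ i, 1 ≤ i → (a i : ℤ) = ⌊t i⌋)
    (htrec : ∀ i, 1 ≤ i → t (i + 1) = 1 / (t i - (a i : ℝ)))
    (hq0 : q 0 = 1) (hq1 : q 1 = a 1)
    (hqrec : ∀ i, 1 ≤ i → q (i + 1) = a (i + 1) * q i + q (i - 1)) :
    ∀ i, (q i : ℝ) * α - ((paux a i : ℤ) : ℝ)
      = (-1 : ℝ) ^ i * ∏ j ∈ Icc 1 (i+1), (t j)⁻¹ := by
  have htf := tfacts α t a hirr hα ht1 hta htrec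
  have hff := fract_facts α t a hirr hα ht1 hta htrec
  have hα0 : α ≠ 0 := ne_of_gt hα.1
  suffices H : ∀ i, ((q i : ℝ) * α - ((paux a i : ℤ) : ℝ)
      = (-1 : ℝ) ^ i * ∏ j ∈ Icc 1 (i+1), (t j)⁻¹) ∧
      ((q (i+1) : ℝ) * α - ((paux a (i+1) : ℤ) : ℝ)
      = (-1 : ℝ) ^ (i+1) * ∏ j ∈ Icc 1 (i+2), (t j)⁻¹) by
    exact fun i => (H i).1
  intro i
  induction i with
  | zero =>
    constructor
    · simp only [hq0, paux, pow_zero, one_mul, Icc_self, prod_singleton, ht1, one_div,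
        inv_inv, Nat.cast_one, Int.cast_zero, sub_zero]
    · have ht2 : t 2 = 1 / (t 1 - (a 1 : ℝ)) := htrec 1 le_rfl
      have hfr := hff 1 le_rfl
      have ht1pos := (htf 1 le_rfl).2
      have h2 : ∏ j ∈ Icc 1 2, (t j)⁻¹ = (t 1)⁻¹ * (t 2)⁻¹ := by
        rw [prod_Icc_succ_top (by norm_num), Icc_self, prod_singleton]
      simp only [hq1, paux, Int.cast_one]
      rw [h2, ht2, ht1, one_div, one_div, inv_inv, inv_inv]
      have h3 : (1:ℝ)/α - (a 1 : ℝ) ≠ 0 := by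
        rw [← ht1]; exact ne_of_gt hfr.1
      field_simp
      ring
  | succ n ih =>
    refine ⟨ih.2, ?_⟩
    have e1 : q (n+2) = a (n+2) * q (n+1) + q n := by
      have := hqrec (n+1) (by omega); simpa using this
    have e2 : paux a (n+2) = a (n+2) * paux a (n+1) + paux a n := rfl
    have hu := htf (n+2) (by omega)
    have hupos : (0:ℝ) < t (n+2) := lt_trans one_pos hu.2
    have hfr := hff (n+2) (by omega)
    have hv : t (n+3) = 1 / (t (n+2) - (a (n+2) : ℝ)) := htrec (n+2) (by omega)
    have hp2 : ∏ j ∈ Icc 1 (n+3), (t j)⁻¹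
        = (∏ j ∈ Icc 1 (n+2), (t j)⁻¹) * (t (n+3))⁻¹ := by
      rw [prod_Icc_succ_top (by omega)]
    have hp1 : ∏ j ∈ Icc 1 (n+2), (t j)⁻¹
        = (∏ j ∈ Icc 1 (n+1), (t j)⁻¹) * (t (n+2))⁻¹ := by
      rw [prod_Icc_succ_top (by omega)]
    have hlhs : (q (n+2) : ℝ) * α - ((paux a (n+2) : ℤ) : ℝ)
        = (a (n+2) : ℝ) * ((q (n+1) : ℝ) * α - ((paux a (n+1) : ℤ) : ℝ))
          + ((q n : ℝ) * α - ((paux a n : ℤ) : ℝ)) := by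
      rw [e1, e2]; push_cast; ring
    rw [show n+1+1 = n+2 from rfl, hlhs, ih.1, ih.2, hp2, hp1, hv]
    have hvinv : ((1:ℝ) / (t (n+2) - (a (n+2) : ℝ)))⁻¹ = t (n+2) - (a (n+2) : ℝ) := by
      rw [one_div, inv_inv]
    have hune : t (n+2) ≠ 0 := ne_of_gt hupos
    rw [hvinv]
    linear_combination (-((-1:ℝ)^n) * ∏ j ∈ Icc 1 (n+1), (t j)⁻¹) * inv_mul_cancel₀ hune

private lemma D_facts (hirr : Irrational α) (hα : α ∈ Set.Ioo (0:ℝ) 1)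
    (ht1 : t 1 = 1 / α)
    (hta : ∀ i, 1 ≤ i → (a i : ℤ) = ⌊t i⌋)
    (htrec : ∀ i, 1 ≤ i → t (i + 1) = 1 / (t i - (a i : ℝ))) :
    ∀ i, (0 < ∏ j ∈ Icc 1 (i+1), (t j)⁻¹) ∧
      ((1 ≤ i ∨ 2 ≤ a 1) → ∏ j ∈ Icc 1 (i+1), (t j)⁻¹ < 1/2) := by
  have htf := tfacts α t a hirr hα ht1 hta htrec
  have hff := fract_facts α t a hirr hα ht1 hta htrec
  have hpos : ∀ i, (0:ℝ) < ∏ j ∈ Icc 1 (i+1), (t j)⁻¹ := by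
    intro i
    apply prod_pos
    intro j hj
    rw [mem_Icc] at hj
    exact inv_pos.mpr (lt_trans one_pos (htf j hj.1).2)
  intro i
  refine ⟨hpos i, ?_⟩
  rintro (hi | ha1)
  · -- 1 ≤ i
    have base : ∏ j ∈ Icc 1 2, (t j)⁻¹ < 1/2 := by
      have h2 : ∏ j ∈ Icc 1 2, (t j)⁻¹ = (t 1)⁻¹ * (t 2)⁻¹ := by
        rw [prod_Icc_succ_top (by norm_num), Icc_self, prod_singleton]
      have ht2 : t 2 = 1 / (t 1 - (a 1 : ℝ)) := htrec 1 le_rfl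
      have hfr := hff 1 le_rfl
      have ht1pos : (0:ℝ) < t 1 := lt_trans one_pos (htf 1 le_rfl).2
      have ha1' : 1 ≤ a 1 := a_pos α t a hirr hα ht1 hta htrec 1 le_rfl
      have hflr : t 1 < (a 1 : ℝ) + 1 := by
        have h := hta 1 le_rfl
        have := Int.lt_floor_add_one (t 1)
        rw [← h] at this
        exact_mod_cast this
      have ha1R : (1:ℝ) ≤ (a 1 : ℝ) := by exact_mod_cast ha1'
      have hkey : t 1 < 2 * (a 1 : ℝ) := by linarith
      rw [h2, ht2, one_div, inv_inv]
      rw [show (1:ℝ)/2 = 2⁻¹ by norm_num]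
      have h5 : (t 1)⁻¹ * (t 1 - (a 1:ℝ)) = (t 1 - (a 1:ℝ)) / t 1 := by ring
      rw [h5, div_lt_iff₀ ht1pos]
      linarith
    induction i, hi using Nat.le_induction with
    | base => exact base
    | succ i hi ih =>
      have hstep : ∏ j ∈ Icc 1 (i+2), (t j)⁻¹
          = (∏ j ∈ Icc 1 (i+1), (t j)⁻¹) * (t (i+2))⁻¹ := by
        rw [prod_Icc_succ_top (by omega)]
      rw [hstep]
      have h1 : (t (i+2))⁻¹ < 1 := by
        rw [inv_lt_one_iff₀]; right; exact (htf (i+2) (by omega)).2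
      calc (∏ j ∈ Icc 1 (i+1), (t j)⁻¹) * (t (i+2))⁻¹
          < (∏ j ∈ Icc 1 (i+1), (t j)⁻¹) * 1 := by
            apply mul_lt_mul_of_pos_left h1 (hpos i)
        _ = ∏ j ∈ Icc 1 (i+1), (t j)⁻¹ := mul_one _
        _ < 1/2 := ih
  · -- i arbitrary, 2 ≤ a 1 : first show for i = 0, then descend? No: prove D i ≤ D 0 < 1/2.
    have hD0 : ∏ j ∈ Icc 1 1, (t j)⁻¹ < 1/2 := by
      rw [Icc_self, prod_singleton]
      have hfr := hff 1 le_rfl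
      have : (2:ℝ) ≤ (a 1 : ℝ) := by exact_mod_cast ha1
      have ht12 : (2:ℝ) < t 1 := by linarith [hfr.1]
      rw [show (1:ℝ)/2 = 2⁻¹ by norm_num]
      exact inv_strictAnti₀ (by norm_num) ht12
    induction i with
    | zero => exact hD0
    | succ i ih =>
      have hstep : ∏ j ∈ Icc 1 (i+2), (t j)⁻¹
          = (∏ j ∈ Icc 1 (i+1), (t j)⁻¹) * (t (i+2))⁻¹ := by
        rw [prod_Icc_succ_top (by omega)]
      rw [hstep]
      have h1 : (t (i+2))⁻¹ < 1 := by
        rw [inv_lt_one_iff₀]; right; exact (htf (i+2) (by omega)).2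
      calc (∏ j ∈ Icc 1 (i+1), (t j)⁻¹) * (t (i+2))⁻¹
          < (∏ j ∈ Icc 1 (i+1), (t j)⁻¹) * 1 := by
            apply mul_lt_mul_of_pos_left h1 (hpos i)
        _ = ∏ j ∈ Icc 1 (i+1), (t j)⁻¹ := mul_one _
        _ < 1/2 := ih

private lemma delta_sign (δ : ℕ → ℝ) (hirr : Irrational α) (hα : α ∈ Set.Ioo (0:ℝ) 1)
    (ht1 : t 1 = 1 / α)
    (hta : ∀ i, 1 ≤ i → (a i : ℤ) = ⌊t i⌋)
    (htrec : ∀ i, 1 ≤ i → t (i + 1) = 1 / (t i - (a i : ℝ)))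
    (hq0 : q 0 = 1) (hq1 : q 1 = a 1)
    (hqrec : ∀ i, 1 ≤ i → q (i + 1) = a (i + 1) * q i + q (i - 1))
    (hδ : ∀ i, δ i = |(q i : ℝ) * α - ((round ((q i : ℝ) * α) : ℤ) : ℝ)|) :
    ∀ k, (1 ≤ k ∨ 2 ≤ a 1) →
      (-1 : ℝ) ^ k * δ k = (q k : ℝ) * α - ((paux a k : ℤ) : ℝ) := by
  intro k hk
  have hb := beta_id α t a q hirr hα ht1 hta htrec hq0 hq1 hqrec k
  obtain ⟨hDpos, hDlt⟩ := D_facts α t a hirr hα ht1 hta htrec k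
  have hDlt := hDlt hk
  have habs : |(q k : ℝ) * α - ((paux a k : ℤ) : ℝ)| < 1/2 := by
    rw [hb, abs_mul, abs_pow, abs_neg, abs_one, one_pow, one_mul, abs_of_pos hDpos]
    exact hDlt
  have hround : round ((q k : ℝ) * α) = paux a k := by
    have h0 : round ((q k : ℝ) * α - ((paux a k : ℤ) : ℝ)) = 0 := by
      rw [round_eq_zero_iff]
      have := abs_lt.mp habs
      constructor
      · linarith [this.1]
      · exact this.2
    rw [round_sub_intCast] at h0
    omega
  rw [hδ k, hround, hb, abs_mul, abs_pow, abs_neg, abs_one, one_pow, one_mul,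
    abs_of_pos hDpos]

private lemma q_pos (hirr : Irrational α) (hα : α ∈ Set.Ioo (0:ℝ) 1)
    (ht1 : t 1 = 1 / α)
    (hta : ∀ i, 1 ≤ i → (a i : ℤ) = ⌊t i⌋)
    (htrec : ∀ i, 1 ≤ i → t (i + 1) = 1 / (t i - (a i : ℝ)))
    (hq0 : q 0 = 1) (hq1 : q 1 = a 1) :
    ∀ (hqrec : ∀ i, 1 ≤ i → q (i + 1) = a (i + 1) * q i + q (i - 1)) i, 1 ≤ q i := by
  intro hqrec
  have ha1 : 1 ≤ a 1 := a_pos α t a hirr hα ht1 hta htrec 1 le_rfl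
  suffices H : ∀ i, 1 ≤ q i ∧ 1 ≤ q (i+1) from fun i => (H i).1
  intro i
  induction i with
  | zero =>
    refine ⟨by omega, ?_⟩
    show 1 ≤ q 1
    omega
  | succ n ih =>
    refine ⟨ih.2, ?_⟩
    show 1 ≤ q (n+2)
    have e1 : q (n+2) = a (n+2) * q (n+1) + q n := by
      have := hqrec (n+1) (by omega); simpa using this
    have := ih.1
    omega

end Aux

private lemma shift_prod (f : ℕ → ℝ) (q' d : ℕ) :
    ∏ n ∈ Icc 1 q', f (n + d) = ∏ m ∈ Ioc d (d + q'), f m := by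
  have h1 : Finset.Ioc d (d + q') = Finset.map (addLeftEmbedding d) (Finset.Ioc 0 q') := by
    rw [Finset.map_add_left_Ioc]
    norm_num
  have h2 : Finset.Icc 1 q' = Finset.Ioc 0 q' := by
    ext x; simp only [mem_Icc, mem_Ioc]; omega
  rw [h1, Finset.prod_map, h2]
  refine prod_congr rfl fun x _ => ?_
  simp only [addLeftEmbedding_apply]
  congr 1
  omega

private lemma block_prod (f : ℕ → ℝ) (q' c B : ℕ) :
    ∏ s ∈ range B, ∏ n ∈ Icc 1 q', f (n + s * q' + c)
      = ∏ m ∈ Ioc c (c + B * q'), f m := by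
  induction B with
  | zero => simp
  | succ B ih =>
    rw [prod_range_succ, ih]
    have h1 : ∏ n ∈ Icc 1 q', f (n + B * q' + c)
        = ∏ m ∈ Ioc (c + B * q') (c + (B + 1) * q'), f m := by
      calc ∏ n ∈ Icc 1 q', f (n + B * q' + c)
          = ∏ n ∈ Icc 1 q', f (n + (B * q' + c)) :=
            prod_congr rfl fun n _ => by rw [Nat.add_assoc]
        _ = ∏ m ∈ Ioc (B * q' + c) (B * q' + c + q'), f m := shift_prod f q' _
        _ = ∏ m ∈ Ioc (c + B * q') (c + (B + 1) * q'), f m := by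
            congr 1 <;> ring
    rw [h1]
    exact prod_Ioc_consecutive f (Nat.le_add_right _ _)
      (by rw [Nat.succ_mul]; omega)

/-- factorization of the Sudler product along the Ostrowski
expansion. If `N = ∑_{i<ℓ} b i * q i` is the Ostrowski expansion of `N` with
respect to the irrational α (with `q (ℓ-1) ≤ N < q ℓ`), then
`P_N(α) = ∏_{i<ℓ} ∏_{s<b i} P_{q i}(α, ε_{i,s}(N))` with
`ε_{i,s}(N) = q i * (s δ i + ∑_{j=1}^{ℓ-i-1} (-1)^j b (i+j) δ (i+j))` and
`P_{q i}(α, ε) = ∏_{n=1}^{q i} |2 sin(π(nα + (-1)^i ε / q i))|`. -/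
theorem stmt7
    (α : ℝ) (hirr : Irrational α) (hα : α ∈ Set.Ioo (0 : ℝ) 1)
    (t : ℕ → ℝ) (a q : ℕ → ℕ) (δ : ℕ → ℝ)
    (ht1 : t 1 = 1 / α)
    (hta : ∀ i, 1 ≤ i → (a i : ℤ) = ⌊t i⌋)
    (htrec : ∀ i, 1 ≤ i → t (i + 1) = 1 / (t i - (a i : ℝ)))
    (hq0 : q 0 = 1) (hq1 : q 1 = a 1)
    (hqrec : ∀ i, 1 ≤ i → q (i + 1) = a (i + 1) * q i + q (i - 1))
    (hδ : ∀ i, δ i = |(q i : ℝ) * α - ((round ((q i : ℝ) * α) : ℤ) : ℝ)|)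
    (N ℓ : ℕ) (hℓ : 1 ≤ ℓ) (hN1 : q (ℓ - 1) ≤ N) (hN2 : N < q ℓ)
    (b : ℕ → ℕ)
    (host : N = ∑ i ∈ range ℓ, b i * q i)
    (hb0 : b 0 < a 1)
    (hbd : ∀ i, 1 ≤ i → b i ≤ a (i + 1))
    (hrule : ∀ i, 1 ≤ i → b i = a (i + 1) → b (i - 1) = 0)
    (hbz : ∀ i, ℓ ≤ i → b i = 0) :
    ∏ n ∈ Icc 1 N, |2 * Real.sin (Real.pi * (n : ℝ) * α)|
      = ∏ i ∈ range ℓ, ∏ s ∈ range (b i),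
          ∏ n ∈ Icc 1 (q i),
            |2 * Real.sin (Real.pi * ((n : ℝ) * α +
              (-1 : ℝ) ^ i *
                ((q i : ℝ) * ((s : ℝ) * δ i +
                  ∑ j ∈ Icc 1 (ℓ - i - 1), (-1 : ℝ) ^ j * (b (i + j) : ℝ) * δ (i + j)))
                  / (q i : ℝ)))| := by
  have hq1le : ∀ i, 1 ≤ q i := q_pos α t a q hirr hα ht1 hta htrec hq0 hq1 hqrec
  have hkey : ∀ k, (1 ≤ k ∨ 2 ≤ a 1) →
      (-1 : ℝ) ^ k * δ k = (q k : ℝ) * α - ((paux a k : ℤ) : ℝ) :=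
    delta_sign α t a q δ hirr hα ht1 hta htrec hq0 hq1 hqrec hδ
  set f : ℕ → ℝ := fun m => |2 * Real.sin (Real.pi * (m : ℝ) * α)| with hf
  set S : ℕ → ℕ := fun k => ∑ j ∈ Ico k ℓ, b j * q j with hS
  have hSrec : ∀ k, k < ℓ → S k = b k * q k + S (k + 1) := by
    intro k hk
    rw [hS]
    simp only
    rw [← Finset.sum_Ico_consecutive (fun j => b j * q j)
      (show k ≤ k + 1 by omega) (show k + 1 ≤ ℓ by omega),
      Nat.Ico_succ_singleton, sum_singleton]
  have hfac : ∀ i ∈ range ℓ, ∀ s ∈ range (b i), ∀ n ∈ Icc 1 (q i),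
      |2 * Real.sin (Real.pi * ((n : ℝ) * α +
        (-1 : ℝ) ^ i * ((q i : ℝ) * ((s : ℝ) * δ i +
          ∑ j ∈ Icc 1 (ℓ - i - 1), (-1 : ℝ) ^ j * (b (i + j) : ℝ) * δ (i + j)))
          / (q i : ℝ)))|
      = f (n + s * q i + S (i + 1)) := by
    intro i hi s hs n hn
    rw [mem_range] at hi hs
    have hbi : 1 ≤ b i := by omega
    have hqne : (q i : ℝ) ≠ 0 := Nat.cast_ne_zero.mpr (by have := hq1le i; omega)
    have hsigni : (-1 : ℝ) ^ i * δ i = (q i : ℝ) * α - ((paux a i : ℤ) : ℝ) := by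
      rcases Nat.eq_zero_or_pos i with h0 | h1
      · subst h0; exact hkey 0 (Or.inr (by omega))
      · exact hkey i (Or.inl h1)
    have hsignj : ∀ j ∈ Icc 1 (ℓ - i - 1),
        (-1 : ℝ) ^ (i + j) * δ (i + j)
          = (q (i + j) : ℝ) * α - ((paux a (i + j) : ℤ) : ℝ) := by
      intro j hj
      rw [mem_Icc] at hj
      exact hkey (i + j) (Or.inl (by omega))
    have hK : ∑ j ∈ Icc 1 (ℓ - i - 1), b (i + j) * q (i + j) = S (i + 1) := by
      rw [hS]
      simp only
      have h1 : Finset.Ico (i + 1) ℓ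
          = Finset.map (addLeftEmbedding i) (Finset.Icc 1 (ℓ - i - 1)) := by
        rw [Finset.map_add_left_Icc]
        ext x
        simp only [mem_Ico, mem_Icc]
        omega
      rw [h1, Finset.sum_map]
      simp only [addLeftEmbedding_apply]
    have harg : (n : ℝ) * α +
        (-1 : ℝ) ^ i * ((q i : ℝ) * ((s : ℝ) * δ i +
          ∑ j ∈ Icc 1 (ℓ - i - 1), (-1 : ℝ) ^ j * (b (i + j) : ℝ) * δ (i + j)))
          / (q i : ℝ)
        = ((n + s * q i + S (i + 1) : ℕ) : ℝ) * α
          - (((s : ℤ) * paux a i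
              + ∑ j ∈ Icc 1 (ℓ - i - 1), (b (i + j) : ℤ) * paux a (i + j) : ℤ) : ℝ) := by
      rw [mul_div_assoc, mul_div_cancel_left₀ _ hqne]
      have e2 : (-1 : ℝ) ^ i * ((s : ℝ) * δ i +
            ∑ j ∈ Icc 1 (ℓ - i - 1), (-1 : ℝ) ^ j * (b (i + j) : ℝ) * δ (i + j))
          = (s : ℝ) * ((-1 : ℝ) ^ i * δ i) +
            ∑ j ∈ Icc 1 (ℓ - i - 1),
              (b (i + j) : ℝ) * ((-1 : ℝ) ^ (i + j) * δ (i + j)) := by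
        rw [mul_add, mul_sum]
        congr 1
        · ring
        · exact sum_congr rfl fun j _ => by rw [pow_add]; ring
      rw [e2, hsigni]
      have e3 : ∑ j ∈ Icc 1 (ℓ - i - 1),
            (b (i + j) : ℝ) * ((-1 : ℝ) ^ (i + j) * δ (i + j))
          = (∑ j ∈ Icc 1 (ℓ - i - 1), (b (i + j) : ℝ) * (q (i + j) : ℝ)) * α
            - ∑ j ∈ Icc 1 (ℓ - i - 1), (b (i + j) : ℝ) * ((paux a (i + j) : ℤ) : ℝ) := by
        rw [sum_mul, ← sum_sub_distrib]
        refine sum_congr rfl fun j hj => ?_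
        rw [hsignj j hj]
        ring
      rw [e3, ← hK]
      push_cast
      ring
    rw [harg, hf]
    simp only
    set M : ℤ := (s : ℤ) * paux a i
        + ∑ j ∈ Icc 1 (ℓ - i - 1), (b (i + j) : ℤ) * paux a (i + j) with hM
    have e5 : Real.pi * (((n + s * q i + S (i + 1) : ℕ) : ℝ) * α - (M : ℝ))
        = Real.pi * ((n + s * q i + S (i + 1) : ℕ) : ℝ) * α - (M : ℝ) * Real.pi := by
      ring
    rw [e5, Real.sin_sub_int_mul_pi]
    rw [show (2 : ℝ) * ((-1 : ℝ) ^ M *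
          Real.sin (Real.pi * ((n + s * q i + S (i + 1) : ℕ) : ℝ) * α))
        = (-1 : ℝ) ^ M *
          (2 * Real.sin (Real.pi * ((n + s * q i + S (i + 1) : ℕ) : ℝ) * α)) from by ring]
    rw [abs_mul]
    have habs1 : |(-1 : ℝ) ^ M| = 1 := by
      rcases Int.even_or_odd M with h | h
      · rw [h.neg_one_zpow, abs_one]
      · rw [h.neg_one_zpow, abs_neg, abs_one]
    rw [habs1, one_mul]
  have tele : ∀ d k, k + d = ℓ →
      ∏ i ∈ Ico k ℓ, (∏ m ∈ Ioc (S (i + 1)) (S i), f m)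
        = ∏ m ∈ Ioc 0 (S k), f m := by
    intro d
    induction d with
    | zero =>
      intro k hk
      have hkeq : k = ℓ := by omega
      subst hkeq
      have hS0 : S k = 0 := by rw [hS]; simp
      rw [hS0]
      simp
    | succ d ih =>
      intro k hk
      have hkl : k < ℓ := by omega
      have hsplit : ∏ i ∈ Ico k ℓ, (∏ m ∈ Ioc (S (i + 1)) (S i), f m)
          = (∏ m ∈ Ioc (S (k + 1)) (S k), f m)
            * ∏ i ∈ Ico (k + 1) ℓ, (∏ m ∈ Ioc (S (i + 1)) (S i), f m) := by
        rw [← Finset.prod_Ico_consecutive _ (show k ≤ k + 1 by omega)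
          (show k + 1 ≤ ℓ by omega), Nat.Ico_succ_singleton, prod_singleton]
      rw [hsplit, ih (k + 1) (by omega), mul_comm]
      exact prod_Ioc_consecutive f (Nat.zero_le _)
        (by rw [hSrec k hkl]; omega)
  calc ∏ n ∈ Icc 1 N, |2 * Real.sin (Real.pi * (n : ℝ) * α)|
      = ∏ m ∈ Ioc 0 (S 0), f m := by
        have h1 : Finset.Icc 1 N = Finset.Ioc 0 N := by
          ext x; simp only [mem_Icc, mem_Ioc]; omega
        have h2 : S 0 = N := by
          rw [hS]; simp only; rw [← Finset.range_eq_Ico, ← host]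
        rw [h1, h2]
    _ = ∏ i ∈ Ico 0 ℓ, (∏ m ∈ Ioc (S (i + 1)) (S i), f m) :=
        (tele ℓ 0 (by omega)).symm
    _ = ∏ i ∈ range ℓ, ∏ s ∈ range (b i),
          ∏ n ∈ Icc 1 (q i), f (n + s * q i + S (i + 1)) := by
        rw [← Finset.range_eq_Ico]
        refine prod_congr rfl fun i hi => ?_
        rw [mem_range] at hi
        have hSi : S i = S (i + 1) + b i * q i := by rw [hSrec i hi]; omega
        rw [hSi, ← block_prod f (q i) (S (i + 1)) (b i)]
    _ = _ := by
        refine prod_congr rfl fun i hi => prod_congr rfl fun ss hss =>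
          prod_congr rfl fun n hn => ?_
        exact (hfac i hi ss hss n hn).symm
end

section
/- Let α be irrational with Ostrowski digits b_i and perturbations ε_{i,s}(N) = q_i(s δ_i + Σ_{j=1}^{ℓ-i-1} (-1)^j b_{i+j}(N) δ_{i+j}). Then for every N, every i, and every s with 0 ≤ s ≤ b_i(N) - 1, one has -λ_i + λ_{i,1} ≤ ε_{i,s}(N) ≤ (a_{i+1} - 1)λ_i + λ_{i,1}, where λ_i = q_i δ_i and λ_{i,1} = q_i δ_{i+1}. -/
open Finset

/-- Auxiliary numerator sequence for the continued fraction convergents. -/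
private def pseq (a : ℕ → ℕ) : ℕ → ℤ
  | 0 => 0
  | 1 => 1
  | (n+2) => (a (n+2) : ℤ) * pseq a (n+1) + pseq a n

private lemma sumSplit (b : ℕ → ℕ) (c : ℕ → ℝ) (k n : ℕ) :
    (∑ j ∈ range (n+1), (-1:ℝ)^j * (b (k+j) : ℝ) * c (k+j))
      = (b k : ℝ) * c k - ∑ j ∈ range n, (-1:ℝ)^j * (b (k+1+j) : ℝ) * c (k+1+j) := by
  rw [Finset.sum_range_succ']
  have e1 : ∀ j ∈ range n, (-1:ℝ)^(j+1) * (b (k+(j+1)) : ℝ) * c (k+(j+1))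
      = -((-1:ℝ)^j * (b (k+1+j) : ℝ) * c (k+1+j)) := by
    intro j _
    have h2 : k+(j+1) = k+1+j := by omega
    rw [h2]; ring
  rw [Finset.sum_congr rfl e1, Finset.sum_neg_distrib]
  simp
  ring

private lemma sumLB (a b : ℕ → ℕ) (c : ℕ → ℝ) (hc : ∀ k, 0 ≤ c k)
    (hrec : ∀ k, 1 ≤ k → (a (k+1) : ℝ) * c k + c (k+1) ≤ c (k-1))
    (hb : ∀ k, 1 ≤ k → b k ≤ a (k+1)) :
    ∀ m k, 1 ≤ k →
      -c k ≤ (∑ j ∈ range m, (-1:ℝ)^j * (b (k+j) : ℝ) * c (k+j)) ∧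
      (∑ j ∈ range m, (-1:ℝ)^j * (b (k+j) : ℝ) * c (k+j)) ≤ c (k-1) := by
  intro m
  induction m with
  | zero =>
    intro k hk
    simp only [range_zero, sum_empty]
    exact ⟨by linarith [hc k], hc (k-1)⟩
  | succ n ih =>
    intro k hk
    obtain ⟨h1, h2⟩ := ih (k+1) (by omega)
    have h2' : (∑ j ∈ range n, (-1:ℝ)^j * (b (k+1+j) : ℝ) * c (k+1+j)) ≤ c k := by
      simpa using h2
    rw [sumSplit]
    have hbk : (b k : ℝ) ≤ (a (k+1) : ℝ) := by exact_mod_cast hb k hk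
    have hmul : (b k : ℝ) * c k ≤ (a (k+1) : ℝ) * c k :=
      mul_le_mul_of_nonneg_right hbk (hc k)
    have hnn : (0:ℝ) ≤ (b k : ℝ) * c k := mul_nonneg (Nat.cast_nonneg _) (hc k)
    have hr := hrec k hk
    exact ⟨by linarith, by linarith⟩

private lemma sumUB2 (a b : ℕ → ℕ) (c : ℕ → ℝ) (hc : ∀ k, 0 ≤ c k)
    (hrec : ∀ k, 1 ≤ k → (a (k+1) : ℝ) * c k + c (k+1) ≤ c (k-1))
    (hb : ∀ k, 1 ≤ k → b k ≤ a (k+1))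
    (hmono : ∀ k, 1 ≤ k → c k ≤ c (k-1)) :
    ∀ m k, 1 ≤ k → b k < a (k+1) →
      (∑ j ∈ range m, (-1:ℝ)^j * (b (k+j) : ℝ) * c (k+j)) ≤ c (k-1) - c k := by
  intro m k hk hbk
  cases m with
  | zero =>
    simp only [range_zero, sum_empty]
    linarith [hmono k hk]
  | succ n =>
    rw [sumSplit]
    obtain ⟨h1, _⟩ := sumLB a b c hc hrec hb n (k+1) (by omega)
    have hbk' : (b k : ℝ) ≤ (a (k+1) : ℝ) - 1 := by
      have : (b k : ℝ) + 1 ≤ (a (k+1) : ℝ) := by exact_mod_cast Nat.succ_le_of_lt hbk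
      linarith
    have hmul : (b k : ℝ) * c k ≤ ((a (k+1) : ℝ) - 1) * c k :=
      mul_le_mul_of_nonneg_right hbk' (hc k)
    have hr := hrec k hk
    linarith

/-- bounds for the admissible perturbations. For the Ostrowski
expansion `N = ∑_{i<ℓ} b i * q i` of `N` with respect to irrational α and
`ε_{i,s}(N) = q i * (s δ i + ∑_{j=1}^{ℓ-i-1} (-1)^j b (i+j) δ (i+j))`, one has
`-λ i + λ_{i,1} ≤ ε_{i,s}(N) ≤ (a (i+1) - 1) λ i + λ_{i,1}` for every `i` and
every `0 ≤ s ≤ b i - 1`, where `λ i = q i * δ i` and `λ_{i,1} = q i * δ (i+1)`. -/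
theorem stmt8
    (α : ℝ) (hirr : Irrational α) (hα : α ∈ Set.Ioo (0 : ℝ) 1)
    (t : ℕ → ℝ) (a q : ℕ → ℕ) (δ : ℕ → ℝ)
    (ht1 : t 1 = 1 / α)
    (hta : ∀ i, 1 ≤ i → (a i : ℤ) = ⌊t i⌋)
    (htrec : ∀ i, 1 ≤ i → t (i + 1) = 1 / (t i - (a i : ℝ)))
    (hq0 : q 0 = 1) (hq1 : q 1 = a 1)
    (hqrec : ∀ i, 1 ≤ i → q (i + 1) = a (i + 1) * q i + q (i - 1))
    (hδ : ∀ i, δ i = |(q i : ℝ) * α - ((round ((q i : ℝ) * α) : ℤ) : ℝ)|)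
    (N ℓ : ℕ) (hℓ : 1 ≤ ℓ) (hN : N < q ℓ)
    (b : ℕ → ℕ)
    (host : N = ∑ i ∈ range ℓ, b i * q i)
    (hb0 : b 0 < a 1)
    (hbd : ∀ i, 1 ≤ i → b i ≤ a (i + 1))
    (hrule : ∀ i, 1 ≤ i → b i = a (i + 1) → b (i - 1) = 0)
    (hbz : ∀ i, ℓ ≤ i → b i = 0) :
    ∀ i s : ℕ, s < b i →
      -((q i : ℝ) * δ i) + (q i : ℝ) * δ (i + 1)
          ≤ (q i : ℝ) * ((s : ℝ) * δ i +
              ∑ j ∈ Icc 1 (ℓ - i - 1), (-1 : ℝ) ^ j * (b (i + j) : ℝ) * δ (i + j)) ∧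
      (q i : ℝ) * ((s : ℝ) * δ i +
              ∑ j ∈ Icc 1 (ℓ - i - 1), (-1 : ℝ) ^ j * (b (i + j) : ℝ) * δ (i + j))
          ≤ ((a (i + 1) : ℝ) - 1) * ((q i : ℝ) * δ i) + (q i : ℝ) * δ (i + 1) := by
  intro i s hs
  have hα0 : (0:ℝ) < α := hα.1
  have hα1 : α < 1 := hα.2
  have hbi : 1 ≤ b i := by omega
  -- facts about t
  have hTfacts : ∀ n, 1 ≤ n → Irrational (t n) ∧ 1 < t n := by
    intro n hn
    induction n with
    | zero => omega
    | succ m ih =>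
      rcases Nat.lt_or_ge 0 m with hm | hm
      · obtain ⟨hirrm, htm⟩ := ih hm
        have hfl : (a m : ℝ) ≤ t m := by
          have h := Int.floor_le (t m)
          rw [← hta m hm] at h
          exact_mod_cast h
        have hne : t m ≠ (a m : ℝ) := by
          have h := hirrm.ne_int (a m : ℤ)
          simpa using h
        have hpos : 0 < t m - (a m : ℝ) := by
          have := lt_of_le_of_ne hfl (fun h => hne h.symm)
          linarith
        have hlt1 : t m - (a m : ℝ) < 1 := by
          have h := Int.lt_floor_add_one (t m)
          rw [← hta m hm] at h
          push_cast at h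
          linarith
        have htr := htrec m hm
        constructor
        · rw [htr, one_div]
          exact (hirrm.sub_natCast (a m)).inv
        · rw [htr, lt_div_iff₀ hpos]
          linarith
      · have hm0 : m = 0 := by omega
        subst hm0
        constructor
        · rw [ht1, one_div]
          exact hirr.inv
        · rw [ht1, lt_div_iff₀ hα0]
          linarith
  have hr : ∀ n, 1 ≤ n → 0 < t n - (a n : ℝ) ∧ t n - (a n : ℝ) < 1 := by
    intro n hn
    obtain ⟨hirrn, htn⟩ := hTfacts n hn
    have hfl : (a n : ℝ) ≤ t n := by
      have h := Int.floor_le (t n)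
      rw [← hta n hn] at h
      exact_mod_cast h
    have hne : t n ≠ (a n : ℝ) := by
      have h := hirrn.ne_int (a n : ℤ)
      simpa using h
    have hlt1 : t n - (a n : ℝ) < 1 := by
      have h := Int.lt_floor_add_one (t n)
      rw [← hta n hn] at h
      push_cast at h
      linarith
    exact ⟨by have := lt_of_le_of_ne hfl (fun h => hne h.symm); linarith, hlt1⟩
  have ha1 : ∀ n, 1 ≤ n → 1 ≤ a n := by
    intro n hn
    have h1 := (hTfacts n hn).2
    have h2 : (1:ℤ) ≤ ⌊t n⌋ := Int.le_floor.2 (by exact_mod_cast h1.le)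
    rw [← hta n hn] at h2
    exact_mod_cast h2
  -- the sequence c n = |q n α - p n|
  set c : ℕ → ℝ := fun n => α * ∏ j ∈ Icc 1 n, (t j - (a j : ℝ)) with hc_def
  have hc0 : c 0 = α := by
    simp [hc_def, Finset.Icc_eq_empty_of_lt (by norm_num : (0:ℕ) < 1)]
  have hcpos : ∀ n, 0 < c n := by
    intro n
    apply mul_pos hα0
    apply Finset.prod_pos
    intro j hj
    exact (hr j (Finset.mem_Icc.1 hj).1).1
  have hcnn : ∀ n, 0 ≤ c n := fun n => (hcpos n).le
  have hcstep : ∀ n, c (n+1) = c n * (t (n+1) - (a (n+1) : ℝ)) := by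
    intro n
    simp only [hc_def]
    rw [Finset.prod_Icc_succ_top (by omega : 1 ≤ n+1)]
    ring
  have hcdec : ∀ n, c (n+1) < c n := by
    intro n
    rw [hcstep n]
    obtain ⟨h1, h2⟩ := hr (n+1) (by omega)
    nlinarith [hcpos n]
  have hcmono : ∀ m n : ℕ, m ≤ n → c n ≤ c m := by
    intro m n h
    induction h with
    | refl => exact le_rfl
    | @step k h ih => exact (hcdec k).le.trans ih
  have hkey : ∀ n, (a (n+2) : ℝ) * c (n+1) + c (n+2) = c n := by
    intro n
    have htr := htrec (n+1) (by omega)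
    have hp := (hr (n+1) (by omega)).1
    rw [hcstep (n+1), hcstep n, htr]
    field_simp
    ring
  -- the β formula
  have hqrec' : ∀ n, q (n+2) = a (n+2) * q (n+1) + q n := by
    intro n
    have h := hqrec (n+1) (by omega)
    simpa using h
  have hαt : α * t 1 = 1 := by
    rw [ht1]
    field_simp
  have hβ : ∀ n, (q n : ℝ) * α - (pseq a n : ℝ) = (-1:ℝ)^n * c n := by
    have H : ∀ n, ((q n : ℝ) * α - (pseq a n : ℝ) = (-1:ℝ)^n * c n) ∧
        ((q (n+1) : ℝ) * α - (pseq a (n+1) : ℝ) = (-1:ℝ)^(n+1) * c (n+1)) := by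
      intro n
      induction n with
      | zero =>
        constructor
        · simp [hq0, pseq, hc0]
        · have hc1 : c 1 = α * (t 1 - (a 1 : ℝ)) := by rw [hcstep 0, hc0]
          have h2 : α * (t 1 - (a 1 : ℝ)) = 1 - (a 1 : ℝ) * α := by
            rw [mul_sub, hαt]; ring
          simp only [hq1, pseq, pow_one]
          rw [hc1, h2]
          push_cast
          ring
      | succ n ih =>
        obtain ⟨e0, e1⟩ := ih
        refine ⟨e1, ?_⟩
        have hq2 := hqrec' n
        have hp2 : pseq a (n+2) = (a (n+2) : ℤ) * pseq a (n+1) + pseq a n := rfl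
        have hk := hkey n
        rw [hq2, hp2]
        push_cast
        have hcc : (-1:ℝ)^(n+2) * c (n+2)
            = (a (n+2) : ℝ) * ((-1:ℝ)^(n+1) * c (n+1)) + (-1:ℝ)^n * c n := by
          have h3 : c (n+2) = c n - (a (n+2) : ℝ) * c (n+1) := by linarith
          rw [h3]; ring
        rw [hcc, ← e0, ← e1]
        ring
    exact fun n => (H n).1
  -- c 1 < 1/2
  have hA1 : (1:ℝ) ≤ (a 1 : ℝ) := by exact_mod_cast ha1 1 le_rfl
  have hflt : t 1 < (a 1 : ℝ) + 1 := by
    have h := Int.lt_floor_add_one (t 1)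
    rw [← hta 1 le_rfl] at h
    push_cast at h
    linarith
  have h2 : 1 < ((a 1 : ℝ) + 1) * α := by
    rw [ht1] at hflt
    rw [div_lt_iff₀ hα0] at hflt
    linarith
  have hc1eq : c 1 = 1 - (a 1 : ℝ) * α := by
    rw [hcstep 0, hc0, mul_sub, hαt]
    ring
  have hc1lt : c 1 < 1/2 := by
    rw [hc1eq]
    by_cases hhalf : α ≤ 1/2
    · nlinarith
    · nlinarith
  have hchalf : ∀ n, 1 ≤ n → c n < 1/2 :=
    fun n hn => lt_of_le_of_lt (hcmono 1 n hn) hc1lt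
  -- δ n = c n for n ≥ 1
  have hδc : ∀ n, 1 ≤ n → δ n = c n := by
    intro n hn
    have hb' := hβ n
    have habs : |(-1:ℝ)^n * c n| = c n := by
      rw [abs_mul, abs_pow, abs_neg, abs_one, one_pow, one_mul, abs_of_pos (hcpos n)]
    have hbnd : -(1/2:ℝ) < (-1:ℝ)^n * c n ∧ (-1:ℝ)^n * c n < 1/2 := by
      have := hchalf n hn
      have h := abs_lt.1 (lt_of_le_of_lt (le_of_eq habs) this)
      exact h
    have hx : (q n : ℝ) * α = (pseq a n : ℝ) + (-1:ℝ)^n * c n := by linarith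
    have hround : round ((q n : ℝ) * α) = pseq a n := by
      rw [round_eq, Int.floor_eq_iff]
      constructor
      · rw [hx]; linarith [hbnd.1]
      · rw [hx]; push_cast; linarith [hbnd.2]
    rw [hδ n, hround, hb', habs]
  -- δ i = c i even for i = 0 (the case i = 0 forces a 1 ≥ 2)
  have hδi : δ i = c i := by
    rcases Nat.eq_zero_or_pos i with h0 | hp
    · subst h0
      have ha2 : 2 ≤ a 1 := by omega
      have hfl : (a 1 : ℝ) ≤ t 1 := by
        have h := Int.floor_le (t 1)
        rw [← hta 1 le_rfl] at h
        exact_mod_cast h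
      have h2a : (2:ℝ) ≤ (a 1 : ℝ) := by exact_mod_cast ha2
      have h2α : 2 * α ≤ 1 := by
        rw [ht1] at hfl
        have := (le_div_iff₀ hα0).1 (le_trans h2a hfl)
        linarith
      have hαne : α ≠ 1/2 := by
        intro h
        have hh : ¬ Irrational ((1/2 : ℚ) : ℝ) := Rat.not_irrational _
        push_cast at hh
        rw [h] at hirr
        exact hh hirr
      have hhalf : α < 1/2 := lt_of_le_of_ne (by linarith) hαne
      have hround0 : round ((q 0 : ℝ) * α) = 0 := by
        have hq0' : ((q 0 : ℕ) : ℝ) = 1 := by rw [hq0]; norm_num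
        rw [hq0', one_mul, round_eq, Int.floor_eq_zero_iff]
        constructor
        · linarith
        · linarith
      have hq0' : ((q 0 : ℕ) : ℝ) = 1 := by rw [hq0]; norm_num
      rw [hδ 0, hround0, hq0', one_mul, hc0]
      push_cast
      rw [sub_zero, abs_of_pos hα0]
    · exact hδc i hp
  -- rewrite the sum
  set m := ℓ - i - 1 with hm_def
  have hsum : (∑ j ∈ Icc 1 m, (-1:ℝ)^j * (b (i+j) : ℝ) * δ (i+j))
      = -∑ j ∈ range m, (-1:ℝ)^j * (b (i+1+j) : ℝ) * c (i+1+j) := by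
    rw [← Finset.Ico_add_one_right_eq_Icc, Finset.sum_Ico_eq_sum_range]
    simp only [Nat.succ_sub_one, Nat.add_sub_cancel]
    rw [← Finset.sum_neg_distrib]
    apply Finset.sum_congr rfl
    intro j hj
    have hidx : i + (1+j) = i+1+j := by omega
    have hδ' : δ (i+(1+j)) = c (i+1+j) := by
      rw [hidx]; exact hδc _ (by omega)
    rw [hδ', hidx]
    ring
  -- bounds on the tail sum
  have hrec' : ∀ k, 1 ≤ k → (a (k+1) : ℝ) * c k + c (k+1) ≤ c (k-1) := by
    intro k hk
    obtain ⟨k', rfl⟩ : ∃ k', k = k'+1 := ⟨k-1, by omega⟩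
    simpa using (hkey k').le
  have hmono' : ∀ k, 1 ≤ k → c k ≤ c (k-1) := by
    intro k hk
    obtain ⟨k', rfl⟩ : ∃ k', k = k'+1 := ⟨k-1, by omega⟩
    simpa using (hcdec k').le
  obtain ⟨hL, hU⟩ := sumLB a b c hcnn hrec' hbd m (i+1) (by omega)
  have hbstrict : b (i+1) < a (i+2) := by
    have h1 : b (i+1) ≤ a (i+2) := hbd (i+1) (by omega)
    rcases Nat.lt_or_ge (b (i+1)) (a (i+2)) with h | h
    · exact h
    · have he : b (i+1) = a (i+2) := le_antisymm h1 h
      have h0 : b i = 0 := hrule (i+1) (by omega) he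
      omega
  have hU2 : (∑ j ∈ range m, (-1:ℝ)^j * (b (i+1+j) : ℝ) * c (i+1+j)) ≤ c i - c (i+1) := by
    have h := sumUB2 a b c hcnn hrec' hbd hmono' m (i+1) (by omega) hbstrict
    simpa using h
  have hL' : -c (i+1) ≤ (∑ j ∈ range m, (-1:ℝ)^j * (b (i+1+j) : ℝ) * c (i+1+j)) := hL
  -- finish
  rw [hδi, hδc (i+1) (by omega), hsum]
  set U := ∑ j ∈ range m, (-1:ℝ)^j * (b (i+1+j) : ℝ) * c (i+1+j) with hU_def
  have hq0'' : (0:ℝ) ≤ (q i : ℝ) := Nat.cast_nonneg _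
  have hsa : (s:ℝ) ≤ (a (i+1) : ℝ) - 1 := by
    have h2' : b i ≤ a (i+1) := by
      rcases Nat.eq_zero_or_pos i with rfl | hip
      · exact Nat.le_of_lt hb0
      · exact hbd i hip
    have h3 : s + 1 ≤ a (i+1) := by omega
    have h4 : (s:ℝ) + 1 ≤ (a (i+1) : ℝ) := by exact_mod_cast h3
    linarith
  constructor
  · have hinner : -c i + c (i+1) ≤ (s:ℝ) * c i + -U := by
      have hs0 : (0:ℝ) ≤ (s:ℝ) * c i := mul_nonneg (Nat.cast_nonneg _) (hcnn i)
      linarith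
    have h := mul_le_mul_of_nonneg_left hinner hq0''
    calc -((q i : ℝ) * c i) + (q i : ℝ) * c (i+1)
        = (q i : ℝ) * (-c i + c (i+1)) := by ring
      _ ≤ (q i : ℝ) * ((s:ℝ) * c i + -U) := h
  · have hinner : (s:ℝ) * c i + -U ≤ ((a (i+1) : ℝ) - 1) * c i + c (i+1) := by
      have hmul := mul_le_mul_of_nonneg_right hsa (hcnn i)
      linarith
    have h := mul_le_mul_of_nonneg_left hinner hq0''
    calc (q i : ℝ) * ((s:ℝ) * c i + -U)
        ≤ (q i : ℝ) * (((a (i+1) : ℝ) - 1) * c i + c (i+1)) := h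
      _ = ((a (i+1) : ℝ) - 1) * ((q i : ℝ) * c i) + (q i : ℝ) * c (i+1) := by ring
end

section
/- Fix j, m, L with (j+1)m ≤ L. Let G_j^{(1)} be the set of integers N_1 < q_{jm} whose Ostrowski expansion (with respect to r) has digits b_i(N_1) = 0 for jm ≤ i, and with additional structure as in the good-set definition, and let G_{j,L}^{(2)} = { N_2 < q_L : b_i(N_2) = 0 for all i < (j+1)m }. Then the map θ_j(N_1, N_2) = N_1 + N_2 is a bijection from G_j^{(1)} × G_{j,L}^{(2)} onto the set G_{j,L} of integers N < q_L whose Ostrowski digits vanish on the block {jm, ..., (j+1)m - 1} (and whose first such all-zero block is at position j). In particular, the Ostrowski digits of N_1 + N_2 are the concatenation of those of N_1 and N_2. -/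
open Finset

/-- Ostrowski digit conditions for `N` w.r.t. partial quotients `c` and
convergent denominators `q`, for expansions of length `L`. -/
def IsOstrowski (c q : ℕ → ℕ) (L N : ℕ) (b : ℕ → ℕ) : Prop :=
  (N = ∑ i ∈ range L, b i * q i) ∧
  b 0 < c 1 ∧
  (∀ i, 1 ≤ i → b i ≤ c (i + 1)) ∧
  (∀ i, 1 ≤ i → b i = c (i + 1) → b (i - 1) = 0) ∧
  (∀ i, L ≤ i → b i = 0)

/-- `b` has no all-zero block of length `m` at the positions `i*m, …, i*m+m-1`
for `j₀ ≤ i < j` (the "first all-zero block is at position `j`" condition). -/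
def NoEarlierBlock (b : ℕ → ℕ) (m j₀ j : ℕ) : Prop :=
  ∀ i, j₀ ≤ i → i < j → ∃ ℓ, ℓ < m ∧ b (i * m + ℓ) ≠ 0

/-- Any sequence of digits satisfying the Ostrowski digit constraints sums to
less than `q k` over `range k`. -/
lemma sum_lt_aux (c q : ℕ → ℕ) (hq0 : q 0 = 1) (hq1 : q 1 = c 1)
    (hqrec : ∀ i, 1 ≤ i → q (i + 1) = c (i + 1) * q i + q (i - 1))
    (b : ℕ → ℕ) (hb0 : b 0 < c 1)
    (hble : ∀ i, 1 ≤ i → b i ≤ c (i + 1))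
    (hcarry : ∀ i, 1 ≤ i → b i = c (i + 1) → b (i - 1) = 0) :
    ∀ k, ∑ i ∈ range k, b i * q i < q k := by
  intro k
  induction k using Nat.strong_induction_on with
  | _ k ih =>
    match k with
    | 0 => simpa [hq0] using Nat.zero_lt_one
    | 1 => simpa [hq0, hq1] using hb0
    | (n+2) =>
      have hrec := hqrec (n+1) (by omega)
      simp only [Nat.add_sub_cancel] at hrec
      rw [Finset.sum_range_succ]
      have hble' := hble (n+1) (by omega)
      rcases eq_or_lt_of_le hble' with heq | hlt
      · have hzero : b n = 0 := by
          have := hcarry (n+1) (by omega) heq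
          simpa using this
        have h1 : ∑ i ∈ range (n+1), b i * q i = ∑ i ∈ range n, b i * q i := by
          rw [Finset.sum_range_succ, hzero]; simp
        have h2 : ∑ i ∈ range n, b i * q i < q n := ih n (by omega)
        rw [h1, heq, hrec]
        have : n + 1 + 1 = n + 2 := rfl
        omega
      · have h2 : ∑ i ∈ range (n+1), b i * q i < q (n+1) := ih (n+1) (by omega)
        have h3 : b (n+1) * q (n+1) + q (n+1) ≤ c (n+1+1) * q (n+1) := by
          have h4 : b (n+1) + 1 ≤ c (n+1+1) := hlt
          calc b (n+1) * q (n+1) + q (n+1) = (b (n+1) + 1) * q (n+1) := by ring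
          _ ≤ c (n+1+1) * q (n+1) := Nat.mul_le_mul_right _ h4
        rw [hrec]
        omega

/-- Uniqueness of digit expansions whose partial sums satisfy the `sum_lt_aux`
bound. -/
lemma ostrow_unique (q : ℕ → ℕ) (b b' : ℕ → ℕ)
    (hb : ∀ k, ∑ i ∈ range k, b i * q i < q k)
    (hb' : ∀ k, ∑ i ∈ range k, b' i * q i < q k) :
    ∀ k, ∑ i ∈ range k, b i * q i = ∑ i ∈ range k, b' i * q i →
      ∀ i, i < k → b i = b' i := by
  intro k
  induction k with
  | zero => intro _ i hi; omega
  | succ n ih =>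
    intro hsum i hi
    rw [Finset.sum_range_succ, Finset.sum_range_succ] at hsum
    have h1 := hb n
    have h2 := hb' n
    have hdig : b n = b' n := by
      by_contra hne
      rcases Nat.lt_or_ge (b n) (b' n) with h | h
      · have h3 : (b n + 1) * q n ≤ b' n * q n := Nat.mul_le_mul_right _ h
        rw [add_mul, one_mul] at h3
        omega
      · have h : b' n < b n := by omega
        have h3 : (b' n + 1) * q n ≤ b n * q n := Nat.mul_le_mul_right _ h
        rw [add_mul, one_mul] at h3
        omega
    have hS : ∑ i ∈ range n, b i * q i = ∑ i ∈ range n, b' i * q i := by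
      rw [hdig] at hsum; omega
    rcases Nat.lt_or_ge i n with h | h
    · exact ih hS i h
    · have : i = n := by omega
      rw [this, hdig]

/-- Concatenation of two Ostrowski expansions separated by a zero block. -/
lemma concat_aux (c q : ℕ → ℕ) (L j m : ℕ) (hm : 1 ≤ m)
    (N₁ N₂ : ℕ) (b₁ b₂ : ℕ → ℕ)
    (h₁ : IsOstrowski c q L N₁ b₁) (h₁0 : ∀ i, j * m ≤ i → b₁ i = 0)
    (h₂ : IsOstrowski c q L N₂ b₂) (h₂0 : ∀ i, i < (j + 1) * m → b₂ i = 0) :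
    IsOstrowski c q L (N₁ + N₂) (fun i => b₁ i + b₂ i) := by
  obtain ⟨hs₁, h0₁, hle₁, hc₁, hz₁⟩ := h₁
  obtain ⟨hs₂, h0₂, hle₂, hc₂, hz₂⟩ := h₂
  have hjm : j * m < (j + 1) * m := by
    have : j * m + m = (j + 1) * m := by ring
    omega
  have hdisj : ∀ i, b₁ i = 0 ∨ b₂ i = 0 := by
    intro i
    rcases Nat.lt_or_ge i ((j + 1) * m) with h | h
    · exact Or.inr (h₂0 i h)
    · exact Or.inl (h₁0 i (by omega))
  refine ⟨?_, ?_, ?_, ?_, ?_⟩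
  · rw [hs₁, hs₂, ← Finset.sum_add_distrib]
    exact Finset.sum_congr rfl fun i _ => by ring
  · have hb2 : b₂ 0 = 0 := h₂0 0 (by omega)
    simpa [hb2] using h0₁
  · intro i hi
    rcases hdisj i with h | h <;> simp only [h, add_zero, zero_add]
    · exact hle₂ i hi
    · exact hle₁ i hi
  · intro i hi hsum
    simp only at hsum ⊢
    rcases hdisj i with h | h
    · have hb2 : b₂ i = c (i + 1) := by omega
      have hz2 : b₂ (i - 1) = 0 := hc₂ i hi hb2
      have hz1 : b₁ (i - 1) = 0 := by
        rcases Nat.lt_or_ge (i - 1) (j * m) with h' | h'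
        · have hi' : i < (j + 1) * m := by omega
          have : b₂ i = 0 := h₂0 i hi'
          exact hc₁ i hi (by omega)
        · exact h₁0 _ h'
      omega
    · have hb1 : b₁ i = c (i + 1) := by omega
      have hz1 : b₁ (i - 1) = 0 := hc₁ i hi hb1
      have hz2 : b₂ (i - 1) = 0 := by
        rcases Nat.lt_or_ge (i - 1) ((j + 1) * m) with h' | h'
        · exact h₂0 _ h'
        · have : b₁ i = 0 := h₁0 i (by omega)
          exact hc₂ i hi (by omega)
      omega
  · intro i hi
    simp [hz₁ i hi, hz₂ i hi]

/-- splitting of good integers. With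
`G¹ = {N₁ < q (j*m) : digits vanish from j*m on, no earlier all-zero block}`,
`G² = {N₂ < q L : digits vanish below (j+1)*m}` and
`G = {N < q L : digits vanish on the block [j*m, (j+1)*m), first such block at j}`,
the map `(N₁, N₂) ↦ N₁ + N₂` is a bijection from `G¹ × G²` onto `G`; moreover
the Ostrowski digits of `N₁ + N₂` are the concatenation (here: digitwise sum)
of those of `N₁` and `N₂`. -/
theorem stmt14
    (L : ℕ) (c q : ℕ → ℕ)
    (hc : ∀ i, 1 ≤ i → i ≤ L → 1 ≤ c i)
    (hq0 : q 0 = 1) (hq1 : q 1 = c 1)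
    (hqrec : ∀ i, 1 ≤ i → q (i + 1) = c (i + 1) * q i + q (i - 1))
    (j m j₀ : ℕ) (hm : 1 ≤ m) (hj₀ : j₀ ≤ j) (hblock : (j + 1) * m ≤ L) :
    Set.BijOn (fun p : ℕ × ℕ => p.1 + p.2)
      (({N₁ : ℕ | N₁ < q (j * m) ∧ ∃ b, IsOstrowski c q L N₁ b ∧
          (∀ i, j * m ≤ i → b i = 0) ∧ NoEarlierBlock b m j₀ j}) ×ˢ
       ({N₂ : ℕ | N₂ < q L ∧ ∃ b, IsOstrowski c q L N₂ b ∧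
          ∀ i, i < (j + 1) * m → b i = 0}))
      ({N : ℕ | N < q L ∧ ∃ b, IsOstrowski c q L N b ∧
          (∀ i, j * m ≤ i → i < (j + 1) * m → b i = 0) ∧ NoEarlierBlock b m j₀ j})
    ∧
    ∀ (N₁ N₂ : ℕ) (b₁ b₂ : ℕ → ℕ),
      IsOstrowski c q L N₁ b₁ → (∀ i, j * m ≤ i → b₁ i = 0) →
      IsOstrowski c q L N₂ b₂ → (∀ i, i < (j + 1) * m → b₂ i = 0) →
      IsOstrowski c q L (N₁ + N₂) (fun i => b₁ i + b₂ i) := by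
  have hsplit : j * m + m = (j + 1) * m := by ring
  have hjmL : j * m ≤ L := by omega
  have hL1 : 1 ≤ L := by omega
  have hc1 : 1 ≤ c 1 := hc 1 le_rfl hL1
  have key : ∀ N : ℕ, ∀ b : ℕ → ℕ, IsOstrowski c q L N b →
      ∀ k, ∑ i ∈ range k, b i * q i < q k := by
    rintro N b ⟨_, h0, hle, hcar, _⟩
    exact sum_lt_aux c q hq0 hq1 hqrec b h0 hle hcar
  refine ⟨⟨?_, ?_, ?_⟩, fun N₁ N₂ b₁ b₂ h1 h1z h2 h2z =>
    concat_aux c q L j m hm N₁ N₂ b₁ b₂ h1 h1z h2 h2z⟩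
  · -- MapsTo
    rintro ⟨N₁, N₂⟩ ⟨⟨h1lt, b₁, h1, h1z, h1nb⟩, h2lt, b₂, h2, h2z⟩
    have hcc := concat_aux c q L j m hm N₁ N₂ b₁ b₂ h1 h1z h2 h2z
    refine ⟨?_, fun i => b₁ i + b₂ i, hcc, ?_, ?_⟩
    · have hlt := key _ _ hcc L
      rw [← hcc.1] at hlt
      exact hlt
    · intro i hi hi'
      simp [h1z i hi, h2z i hi']
    · intro i hi hij
      obtain ⟨ℓ, hℓ, hne⟩ := h1nb i hi hij
      exact ⟨ℓ, hℓ, by simp only; omega⟩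
  · -- InjOn
    rintro ⟨N₁, N₂⟩ ⟨⟨h1lt, b₁, h1, h1z, h1nb⟩, h2lt, b₂, h2, h2z⟩
      ⟨N₁', N₂'⟩ ⟨⟨h1lt', b₁', h1', h1z', h1nb'⟩, h2lt', b₂', h2', h2z'⟩ heq
    simp only at heq
    have hcc := concat_aux c q L j m hm N₁ N₂ b₁ b₂ h1 h1z h2 h2z
    have hcc' := concat_aux c q L j m hm N₁' N₂' b₁' b₂' h1' h1z' h2' h2z'
    have hsum : ∑ i ∈ range L, (b₁ i + b₂ i) * q i
        = ∑ i ∈ range L, (b₁' i + b₂' i) * q i := by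
      have e := hcc.1
      have e' := hcc'.1
      simp only at e e'
      rw [← e, ← e', heq]
    have hdig := ostrow_unique q _ _ (key _ _ hcc) (key _ _ hcc') L hsum
    have e1 : ∀ (b₁'' b₂'' : ℕ → ℕ) (M : ℕ), IsOstrowski c q L M b₁'' →
        (∀ i, j * m ≤ i → b₁'' i = 0) → (∀ i, i < (j + 1) * m → b₂'' i = 0) →
        M = ∑ i ∈ range (j * m), (b₁'' i + b₂'' i) * q i := by
      intro b₁'' b₂'' M hM hMz hz2
      rw [hM.1, ← Finset.sum_subset (Finset.range_subset_range.2 hjmL)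
        (fun i _ hi => by rw [hMz i (by simpa using hi), zero_mul])]
      refine Finset.sum_congr rfl fun i hi => ?_
      rw [hz2 i (by have := Finset.mem_range.mp hi; omega), add_zero]
    have hN1 : N₁ = N₁' := by
      rw [e1 b₁ b₂ N₁ h1 h1z h2z, e1 b₁' b₂' N₁' h1' h1z' h2z']
      refine Finset.sum_congr rfl fun i hi => ?_
      have := hdig i (lt_of_lt_of_le (Finset.mem_range.mp hi) hjmL)
      rw [this]
    simp only [Prod.mk.injEq]
    exact ⟨hN1, by omega⟩
  · -- SurjOn
    rintro N ⟨hNlt, b, hb, hbz, hnb⟩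
    obtain ⟨hsb, h0b, hleb, hcb, hzb⟩ := hb
    set N₁ := ∑ i ∈ range (j * m), b i * q i with hN₁def
    have hN₁N : N₁ ≤ N := by
      rw [hsb]
      exact Finset.sum_le_sum_of_subset (Finset.range_subset_range.2 hjmL)
    have hN₁lt : N₁ < q (j * m) := sum_lt_aux c q hq0 hq1 hqrec b h0b hleb hcb (j * m)
    have hb₁sum : ∑ i ∈ range L, (if i < j * m then b i else 0) * q i = N₁ := by
      rw [hN₁def, ← Finset.sum_subset (Finset.range_subset_range.2 hjmL)
        (fun i _ hi => by rw [if_neg (by simpa using hi), zero_mul])]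
      exact Finset.sum_congr rfl fun i hi => by rw [if_pos (Finset.mem_range.mp hi)]
    have hb₁ : IsOstrowski c q L N₁ (fun i => if i < j * m then b i else 0) := by
      refine ⟨hb₁sum.symm, ?_, ?_, ?_, ?_⟩
      · simp only
        split
        · exact h0b
        · exact hc1
      · intro i hi
        simp only
        split
        · exact hleb i hi
        · exact Nat.zero_le _
      · intro i hi hs
        simp only at hs ⊢
        by_cases h' : i < j * m
        · rw [if_pos h'] at hs
          have hz := hcb i hi hs
          split
          · exact hz
          · rfl
        · rw [if_neg h'] at hs
          have hbi : b i = c (i + 1) := by have := hleb i hi; omega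
          have hz := hcb i hi hbi
          split
          · exact hz
          · rfl
      · intro i hi
        simp only
        rw [if_neg (by omega)]
    have hb₂sum : N - N₁ = ∑ i ∈ range L, (if i < (j + 1) * m then 0 else b i) * q i := by
      have hterm : ∀ i ∈ range L, b i * q i
          = (if i < j * m then b i else 0) * q i
            + (if i < (j + 1) * m then 0 else b i) * q i := by
        intro i _
        rcases Nat.lt_or_ge i (j * m) with h' | h'
        · rw [if_pos h', if_pos (by omega), zero_mul, add_zero]
        · rcases Nat.lt_or_ge i ((j + 1) * m) with h'' | h''
          · rw [if_neg (by omega), if_pos h'', hbz i h' h'']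
            simp
          · rw [if_neg (by omega), if_neg (by omega), zero_mul, zero_add]
      have hNsum : N = ∑ i ∈ range L, ((if i < j * m then b i else 0) * q i
          + (if i < (j + 1) * m then 0 else b i) * q i) := by
        rw [hsb]
        exact Finset.sum_congr rfl hterm
      rw [Finset.sum_add_distrib, hb₁sum] at hNsum
      omega
    have hb₂ : IsOstrowski c q L (N - N₁) (fun i => if i < (j + 1) * m then 0 else b i) := by
      refine ⟨hb₂sum, ?_, ?_, ?_, ?_⟩
      · simp only
        rw [if_pos (by omega)]
        exact hc1
      · intro i hi
        simp only
        split
        · exact Nat.zero_le _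
        · exact hleb i hi
      · intro i hi hs
        simp only at hs ⊢
        by_cases h' : i < (j + 1) * m
        · rw [if_pos (by omega)]
        · rw [if_neg h'] at hs
          have hz := hcb i hi hs
          split
          · rfl
          · exact hz
      · intro i hi
        simp only
        split
        · rfl
        · exact hzb i hi
    refine ⟨(N₁, N - N₁), ⟨⟨hN₁lt, ?_⟩, ?_, ?_⟩, ?_⟩
    · refine ⟨fun i => if i < j * m then b i else 0, hb₁, ?_, ?_⟩
      · intro i hi
        simp only
        rw [if_neg (by omega)]
      · intro i hi hij
        obtain ⟨ℓ, hℓ, hne⟩ := hnb i hi hij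
        refine ⟨ℓ, hℓ, ?_⟩
        have h5 : (i + 1) * m ≤ j * m := Nat.mul_le_mul_right m (by omega)
        have h6 : i * m + m = (i + 1) * m := by ring
        simp only
        rw [if_pos (by omega)]
        exact hne
    · exact lt_of_le_of_lt (Nat.sub_le _ _) hNlt
    · refine ⟨fun i => if i < (j + 1) * m then 0 else b i, hb₂, ?_⟩
      intro i hi
      simp only
      rw [if_pos hi]
    · simp only
      omega
end

section
/- Let r = [0; c_1, ..., c_L] with max_{i ≤ ℓ+2} c_i ≤ M, and let ε_ℓ be admissible with respect to r and ℓ ≤ L-2. Then for every n ≥ 1, (1 - λ_ℓ (({n⃖r_ℓ} - 1/2)/n))² - (ε_ℓ + λ_ℓ/2)²/n² > 1/(M + C)³ for an absolute constant C, where λ_ℓ = q_ℓ ‖q_ℓ r‖, ⃖r_ℓ = [0; c_ℓ, c_{ℓ-1}, ..., c_1], and {·} is the fractional part. -/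
open Finset

/-- Value of a finite continued fraction `[0; x₁, x₂, ...]`. -/
noncomputable def cfVal : List ℕ → ℝ
  | [] => 0
  | x :: xs => 1 / ((x : ℝ) + cfVal xs)

lemma cfVal_nonneg (l : List ℕ) : 0 ≤ cfVal l := by
  induction l with
  | nil => simp [cfVal]
  | cons x xs ih =>
      simp only [cfVal]
      exact one_div_nonneg.mpr (add_nonneg (Nat.cast_nonneg x) ih)

/-- tail value `[0; c (i+1), ..., c L]`. -/
noncomputable def tl (c : ℕ → ℕ) (L i : ℕ) : ℝ :=
  cfVal ((List.range (L - i)).map (fun j => c (i + j + 1)))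

lemma tl_of_le (c : ℕ → ℕ) (L i : ℕ) (h : L ≤ i) : tl c L i = 0 := by
  simp [tl, Nat.sub_eq_zero_of_le h, cfVal]

lemma tl_nonneg (c : ℕ → ℕ) (L i : ℕ) : 0 ≤ tl c L i := cfVal_nonneg _

lemma tl_succ (c : ℕ → ℕ) (L i : ℕ) (h : i < L) :
    tl c L i = 1 / ((c (i+1) : ℝ) + tl c L (i+1)) := by
  have h1 : L - i = (L - (i+1)) + 1 := by omega
  rw [tl, h1, List.range_succ_eq_map, List.map_cons, List.map_map]
  have h2 : ((fun j => c (i + j + 1)) ∘ Nat.succ) = (fun j => c ((i+1) + j + 1)) := by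
    funext j; simp only [Function.comp]; congr 1; omega
  rw [h2]
  simp only [cfVal]
  norm_num [tl]

lemma tl_succ' (c : ℕ → ℕ) (L i : ℕ) (h : i < L) (hc1 : 1 ≤ c (i+1)) :
    ((c (i+1) : ℝ) + tl c L (i+1)) * tl c L i = 1 := by
  have hd : (0:ℝ) < (c (i+1) : ℝ) + tl c L (i+1) := by
    have : (1:ℝ) ≤ (c (i+1) : ℝ) := by exact_mod_cast hc1
    have := tl_nonneg c L (i+1); linarith
  rw [tl_succ c L i h]
  field_simp

lemma tl_pos (c : ℕ → ℕ) (L i : ℕ) (hc : ∀ k, 1 ≤ k → k ≤ L → 1 ≤ c k) (h : i < L) :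
    0 < tl c L i := by
  have hd : (0:ℝ) < (c (i+1) : ℝ) + tl c L (i+1) := by
    have h1 : (1:ℝ) ≤ (c (i+1) : ℝ) := by exact_mod_cast hc (i+1) (by omega) (by omega)
    have := tl_nonneg c L (i+1); linarith
  rw [tl_succ c L i h]
  positivity

lemma tl_le_one (c : ℕ → ℕ) (L i : ℕ) (hc : ∀ k, 1 ≤ k → k ≤ L → 1 ≤ c k) :
    tl c L i ≤ 1 := by
  rcases le_or_gt L i with h | h
  · rw [tl_of_le c L i h]; norm_num
  · rw [tl_succ c L i h]
    have h1 : (1:ℝ) ≤ (c (i+1) : ℝ) := by exact_mod_cast hc (i+1) (by omega) (by omega)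
    have h2 := tl_nonneg c L (i+1)
    rw [div_le_one (by linarith)]; linarith

lemma tl_lt_one (c : ℕ → ℕ) (L i : ℕ) (hc : ∀ k, 1 ≤ k → k ≤ L → 1 ≤ c k)
    (hcL : 2 ≤ c L) (h : i < L) : tl c L i < 1 := by
  rw [tl_succ c L i h]
  have h2 := tl_nonneg c L (i+1)
  rcases eq_or_lt_of_le (Nat.succ_le_of_lt h) with he | hlt
  · have h1 : (2:ℝ) ≤ (c (i+1) : ℝ) := by exact_mod_cast (he ▸ hcL)
    rw [div_lt_one (by linarith)]; linarith
  · have h1 : (1:ℝ) ≤ (c (i+1) : ℝ) := by exact_mod_cast hc (i+1) (by omega) (by omega)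
    have h3 := tl_pos c L (i+1) hc hlt
    rw [div_lt_one (by linarith)]; linarith

/-- numerators of the convergents -/
def pp (c : ℕ → ℕ) : ℕ → ℕ
  | 0 => 0
  | 1 => 1
  | (i+2) => c (i+2) * pp c (i+1) + pp c i

/-- `D i = r₀ r₁ ⋯ r_i`, equal to `|q_i r - p_i|`. -/
noncomputable def DD (c : ℕ → ℕ) (L i : ℕ) : ℝ := ∏ j ∈ range (i+1), tl c L j

lemma DD_nonneg (c : ℕ → ℕ) (L i : ℕ) : 0 ≤ DD c L i :=
  Finset.prod_nonneg (fun j _ => tl_nonneg c L j)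

lemma DD_pos (c : ℕ → ℕ) (L i : ℕ) (hc : ∀ k, 1 ≤ k → k ≤ L → 1 ≤ c k) (h : i < L) :
    0 < DD c L i :=
  Finset.prod_pos (fun j hj => tl_pos c L j hc (by
    simp only [Finset.mem_range] at hj; omega))

lemma DD_succ (c : ℕ → ℕ) (L i : ℕ) : DD c L (i+1) = DD c L i * tl c L (i+1) :=
  Finset.prod_range_succ _ _

lemma DD_anti (c : ℕ → ℕ) (L : ℕ) (hc : ∀ k, 1 ≤ k → k ≤ L → 1 ≤ c k)
    {i k : ℕ} (h : i ≤ k) : DD c L k ≤ DD c L i := by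
  induction k, h using Nat.le_induction with
  | base => exact le_refl _
  | succ m hm ih =>
      calc DD c L (m+1) = DD c L m * tl c L (m+1) := DD_succ c L m
        _ ≤ DD c L m * 1 := by
            exact mul_le_mul_of_nonneg_left (tl_le_one c L (m+1) hc) (DD_nonneg c L m)
        _ ≤ DD c L i := by rw [mul_one]; exact ih

lemma DD_rec (c : ℕ → ℕ) (L : ℕ) (hc : ∀ k, 1 ≤ k → k ≤ L → 1 ≤ c k)
    {i : ℕ} (h1 : 1 ≤ i) (h2 : i < L) :
    DD c L (i+1) = DD c L (i-1) - (c (i+1) : ℝ) * DD c L i := by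
  obtain ⟨m, rfl⟩ : ∃ m, i = m + 1 := ⟨i - 1, by omega⟩
  simp only [Nat.add_sub_cancel]
  have e1 : DD c L (m+2) = DD c L (m+1) * tl c L (m+2) := DD_succ c L (m+1)
  have e2 : DD c L (m+1) = DD c L m * tl c L (m+1) := DD_succ c L m
  have e3 := tl_succ' c L (m+1) h2 (hc (m+2) (by omega) (by omega))
  linear_combination e1 + ((c (m+2) : ℝ) + tl c L (m+2)) * e2 + (DD c L m) * e3

lemma key_formula (c q : ℕ → ℕ) (L : ℕ) (hc : ∀ k, 1 ≤ k → k ≤ L → 1 ≤ c k)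
    (hq0 : q 0 = 1) (hq1 : q 1 = c 1)
    (hqrec : ∀ i, 1 ≤ i → q (i + 1) = c (i + 1) * q i + q (i - 1)) :
    ∀ i, i ≤ L → (q i : ℝ) * tl c L 0 - (pp c i : ℝ) = (-1)^i * DD c L i := by
  intro i
  induction i using Nat.strong_induction_on with
  | _ i ih =>
    match i with
    | 0 =>
        intro _
        simp [hq0, pp, DD, Finset.prod_range_one]
    | 1 =>
        intro h1
        have e3 := tl_succ' c L 0 (by omega) (by simpa using hc 1 (by omega) (by omega))
        have hD : DD c L 1 = tl c L 0 * tl c L 1 := by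
          simp [DD, Finset.prod_range_succ, Finset.prod_range_one]
        rw [hq1, hD]
        simp only [pp, pow_one, Nat.cast_one]
        push_cast
        linear_combination e3
    | (m+2) =>
        intro hm2
        have k1 := ih (m+1) (by omega) (by omega)
        have k0 := ih m (by omega) (by omega)
        have hrec := hqrec (m+1) (by omega)
        simp only [Nat.add_sub_cancel] at hrec
        have hD := DD_rec c L hc (i := m+1) (by omega) (by omega)
        simp only [Nat.add_sub_cancel] at hD
        rw [hrec, hD]
        have hp : pp c (m+2) = c (m+2) * pp c (m+1) + pp c m := rfl
        rw [hp]
        push_cast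
        linear_combination (c (m+2) : ℝ) * k1 + k0

lemma det_formula (c q : ℕ → ℕ) (hq0 : q 0 = 1) (hq1 : q 1 = c 1)
    (hqrec : ∀ i, 1 ≤ i → q (i + 1) = c (i + 1) * q i + q (i - 1)) :
    ∀ i, (pp c (i+1) : ℤ) * (q i : ℤ) - (pp c i : ℤ) * (q (i+1) : ℤ) = (-1)^i := by
  intro i
  induction i with
  | zero => simp [pp, hq0]
  | succ m ihm =>
      have hrec := hqrec (m+1) (by omega)
      simp only [Nat.add_sub_cancel] at hrec
      have hp : pp c (m+2) = c (m+2) * pp c (m+1) + pp c m := rfl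
      rw [hp, hrec]
      push_cast
      linear_combination (-1 : ℤ) * ihm

lemma one_formula (c q : ℕ → ℕ) (L : ℕ) (hc : ∀ k, 1 ≤ k → k ≤ L → 1 ≤ c k)
    (hq0 : q 0 = 1) (hq1 : q 1 = c 1)
    (hqrec : ∀ i, 1 ≤ i → q (i + 1) = c (i + 1) * q i + q (i - 1))
    (i : ℕ) (h : i + 1 ≤ L) :
    (q (i+1) : ℝ) * DD c L i + (q i : ℝ) * DD c L (i+1) = 1 := by
  have k0 := key_formula c q L hc hq0 hq1 hqrec i (by omega)
  have k1 := key_formula c q L hc hq0 hq1 hqrec (i+1) h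
  have dt := det_formula c q hq0 hq1 hqrec i
  have dtR : (pp c (i+1) : ℝ) * (q i : ℝ) - (pp c i : ℝ) * (q (i+1) : ℝ) = (-1)^i := by
    exact_mod_cast dt
  rcases Nat.even_or_odd i with he | ho
  · rw [he.neg_one_pow] at k0 dtR
    rw [(Even.add_one he).neg_one_pow] at k1
    linear_combination (-(q (i+1) : ℝ)) * k0 + (q i : ℝ) * k1 + dtR
  · rw [ho.neg_one_pow] at k0 dtR
    rw [(Odd.add_one ho).neg_one_pow] at k1
    linear_combination ((q (i+1) : ℝ)) * k0 - (q i : ℝ) * k1 - dtR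

lemma round_formula (c q : ℕ → ℕ) (L : ℕ) (hc : ∀ k, 1 ≤ k → k ≤ L → 1 ≤ c k)
    (hcL : 2 ≤ c L) (hq0 : q 0 = 1) (hq1 : q 1 = c 1)
    (hqrec : ∀ i, 1 ≤ i → q (i + 1) = c (i + 1) * q i + q (i - 1))
    (hL : 2 ≤ L) (i : ℕ) (h1 : 1 ≤ i) (hiL : i ≤ L) :
    round ((q i : ℝ) * tl c L 0) = (pp c i : ℤ) := by
  have k := key_formula c q L hc hq0 hq1 hqrec i hiL
  have hD1 : DD c L 1 < 1/2 := by
    have e3 := tl_succ' c L 0 (by omega) (by simpa using hc 1 (by omega) (by omega))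
    have ht1 : tl c L 1 < 1 := tl_lt_one c L 1 hc hcL (by omega)
    have ht0 : 0 < tl c L 0 := tl_pos c L 0 hc (by omega)
    have ht1n : 0 ≤ tl c L 1 := tl_nonneg c L 1
    have hc1 : (1:ℝ) ≤ (c 1 : ℝ) := by exact_mod_cast hc 1 (by omega) (by omega)
    have hD : DD c L 1 = tl c L 0 * tl c L 1 := by
      simp [DD, Finset.prod_range_succ, Finset.prod_range_one]
    rw [hD]
    nlinarith [mul_pos ht0 (by linarith : (0:ℝ) < (c 1 : ℝ) - tl c L 1)]
  have hDi : DD c L i ≤ DD c L 1 := DD_anti c L hc h1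
  have hDin : 0 ≤ DD c L i := DD_nonneg c L i
  have habs : |(q i : ℝ) * tl c L 0 - (pp c i : ℝ)| < 1/2 := by
    rw [k, abs_mul, abs_pow, abs_neg, abs_one, one_pow, one_mul, abs_of_nonneg hDin]
    linarith
  rw [abs_lt] at habs
  rw [round_eq, Int.floor_eq_iff]
  constructor
  · push_cast; linarith [habs.1]
  · push_cast; linarith [habs.2]

lemma q_ge_one (c q : ℕ → ℕ) (hq0 : q 0 = 1) (hq1 : q 1 = c 1)
    (hqrec : ∀ i, 1 ≤ i → q (i + 1) = c (i + 1) * q i + q (i - 1))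
    (hc1 : 1 ≤ c 1) : ∀ i, 1 ≤ q i := by
  intro i
  induction i using Nat.strong_induction_on with
  | _ i ih =>
    match i with
    | 0 => omega
    | 1 => omega
    | (m+2) =>
        have hrec : q (m+2) = c (m+2) * q (m+1) + q m := hqrec (m+1) (by omega)
        have := ih m (by omega)
        omega

lemma q_mono_step (c q : ℕ → ℕ) (L : ℕ) (hc : ∀ k, 1 ≤ k → k ≤ L → 1 ≤ c k)
    (hq0 : q 0 = 1) (hq1 : q 1 = c 1)
    (hqrec : ∀ i, 1 ≤ i → q (i + 1) = c (i + 1) * q i + q (i - 1))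
    (i : ℕ) (hi : i + 1 ≤ L) : q i ≤ q (i+1) := by
  match i with
  | 0 => rw [hq0, hq1]; exact hc 1 (by omega) (by omega)
  | (k+1) =>
      show q (k+1) ≤ q (k+2)
      have hrec : q (k+2) = c (k+2) * q (k+1) + q k := hqrec (k+1) (by omega)
      have hck : 1 ≤ c (k+2) := hc (k+2) (by omega) (by omega)
      have : q (k+1) ≤ c (k+2) * q (k+1) := Nat.le_mul_of_pos_left _ hck
      omega

lemma S_bound (c : ℕ → ℕ) (L : ℕ) (b : ℕ → ℕ) (ℓ K : ℕ)
    (hc : ∀ k, 1 ≤ k → k ≤ L → 1 ≤ c k) (hK : ℓ + K < L) (hℓ : 1 ≤ ℓ)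
    (hb : ∀ j, 1 ≤ j → b (ℓ+j) ≤ c (ℓ+j+1)) :
    ∀ d k, k + d = K + 1 → 1 ≤ k →
      (-1:ℝ)^k * (∑ j ∈ Icc k K, (-1:ℝ)^j * (b (ℓ+j) : ℝ) * DD c L (ℓ+j)) ≤ DD c L (ℓ+k-1) ∧
      -(DD c L (ℓ+k)) ≤
        (-1:ℝ)^k * (∑ j ∈ Icc k K, (-1:ℝ)^j * (b (ℓ+j) : ℝ) * DD c L (ℓ+j)) := by
  intro d
  induction d with
  | zero =>
      intro k hk hk1
      have : k = K + 1 := by omega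
      subst this
      rw [Finset.Icc_eq_empty (by omega), Finset.sum_empty, mul_zero]
      constructor
      · exact DD_nonneg c L _
      · exact neg_nonpos_of_nonneg (DD_nonneg c L _)
  | succ d ihd =>
      intro k hk hk1
      have hkK : k ≤ K := by omega
      obtain ⟨ih1, ih2⟩ := ihd (k+1) (by omega) (by omega)
      have ih1' : (-1:ℝ)^(k+1) * (∑ j ∈ Icc (k+1) K, (-1:ℝ)^j * (b (ℓ+j) : ℝ) * DD c L (ℓ+j))
          ≤ DD c L (ℓ+k) := by
        have : ℓ + (k+1) - 1 = ℓ + k := by omega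
        rwa [this] at ih1
      rw [Finset.Icc_eq_cons_Ioc hkK, Finset.sum_cons, ← Finset.Icc_add_one_left_eq_Ioc]
      set T := ∑ j ∈ Icc (k+1) K, (-1:ℝ)^j * (b (ℓ+j) : ℝ) * DD c L (ℓ+j) with hT
      have hpow : (-1:ℝ)^k * (-1:ℝ)^k = 1 := by
        rw [← pow_add]; exact Even.neg_one_pow ⟨k, rfl⟩
      have hpow1 : (-1:ℝ)^(k+1) = -((-1:ℝ)^k) := by rw [pow_succ]; ring
      have ih2' : -(DD c L (ℓ+k+1)) ≤ (-1:ℝ)^(k+1) * T := by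
        rwa [show ℓ + (k+1) = ℓ+k+1 from by omega] at ih2
      rw [hpow1] at ih1' ih2'
      have hsplit : (-1:ℝ)^k * ((-1:ℝ)^k * (b (ℓ+k) : ℝ) * DD c L (ℓ+k) + T)
          = (b (ℓ+k) : ℝ) * DD c L (ℓ+k) + (-1:ℝ)^k * T := by
        linear_combination ((b (ℓ+k) : ℝ) * DD c L (ℓ+k)) * hpow
      rw [hsplit]
      have hbk : (b (ℓ+k) : ℝ) ≤ (c (ℓ+k+1) : ℝ) := by exact_mod_cast hb k hk1
      have hrec : DD c L (ℓ+k+1) = DD c L (ℓ+k-1) - (c (ℓ+k+1) : ℝ) * DD c L (ℓ+k) := by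
        have h := DD_rec c L hc (i := ℓ+k) (by omega) (by omega)
        rwa [show ℓ + k - 1 = ℓ + k - 1 from rfl] at h
      have hDk : (0:ℝ) ≤ DD c L (ℓ+k) := DD_nonneg c L _
      have hDk1 : (0:ℝ) ≤ DD c L (ℓ+k+1) := DD_nonneg c L _
      have hbnn : (0:ℝ) ≤ (b (ℓ+k) : ℝ) := Nat.cast_nonneg _
      have hprod : (b (ℓ+k) : ℝ) * DD c L (ℓ+k) ≤ (c (ℓ+k+1) : ℝ) * DD c L (ℓ+k) :=
        mul_le_mul_of_nonneg_right hbk hDk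
      have hprod0 : (0:ℝ) ≤ (b (ℓ+k) : ℝ) * DD c L (ℓ+k) := mul_nonneg hbnn hDk
      constructor
      · -- upper bound
        nlinarith [ih2', hprod, hrec]
      · -- lower bound
        nlinarith [ih1', hprod0]

set_option maxHeartbeats 1000000 in
/-- There is an absolute constant `C` such that for every
rational `r = [0; c 1, …, c L]` with `max_{i ≤ ℓ+2} c i ≤ M` (`1 ≤ ℓ ≤ L-2`) and
every admissible perturbation `ε_ℓ`, one has for all `n ≥ 1`
`(1 - λ_ℓ ({n ⃖r_ℓ} - 1/2)/n)² - (ε_ℓ + λ_ℓ/2)²/n² > 1/(M + C)³`, where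
`λ_ℓ = q ℓ * ‖q ℓ • r‖` and `⃖r_ℓ = [0; c ℓ, …, c 1] = q (ℓ-1) / q ℓ`. -/
theorem stmt15 :
    ∃ C : ℝ, 0 < C ∧
      ∀ (M L ℓ : ℕ) (c q : ℕ → ℕ) (r : ℝ) (δ : ℕ → ℝ),
        (∀ i, 1 ≤ i → i ≤ L → 1 ≤ c i) → 2 ≤ c L →
        r = cfVal ((List.range L).map (fun i => c (i + 1))) →
        q 0 = 1 → q 1 = c 1 →
        (∀ i, 1 ≤ i → q (i + 1) = c (i + 1) * q i + q (i - 1)) →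
        (∀ i, δ i = |(q i : ℝ) * r - ((round ((q i : ℝ) * r) : ℤ) : ℝ)|) →
        1 ≤ ℓ → ℓ + 2 ≤ L →
        (∀ i, 1 ≤ i → i ≤ ℓ + 2 → c i ≤ M) →
        ∀ (N : ℕ) (b : ℕ → ℕ), N < q L → IsOstrowski c q L N b →
          ∀ s : ℕ, s < b ℓ →
            ∀ n : ℕ, 1 ≤ n →
              (1 - ((q ℓ : ℝ) * δ ℓ) *
                    ((Int.fract ((n : ℝ) * ((q (ℓ - 1) : ℝ) / (q ℓ : ℝ))) - 1 / 2) / (n : ℝ))) ^ 2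
                - (((q ℓ : ℝ) * ((s : ℝ) * δ ℓ +
                      ∑ j ∈ Icc 1 (L - 1 - ℓ), (-1 : ℝ) ^ j * (b (ℓ + j) : ℝ) * δ (ℓ + j)))
                    + ((q ℓ : ℝ) * δ ℓ) / 2) ^ 2 / (n : ℝ) ^ 2
              > 1 / ((M : ℝ) + C) ^ 3 := by
  refine ⟨2, by norm_num, ?_⟩
  intro M L ℓ c q r δ hc hcL hr hq0 hq1 hqrec hδ hℓ hℓL hM N b hNq hOst s hs n hn
  obtain ⟨hN, hb0, hble, hbc, hbz⟩ := hOst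
  obtain ⟨m, rfl⟩ : ∃ m, ℓ = m + 1 := ⟨ℓ - 1, by omega⟩
  simp only [Nat.add_sub_cancel]
  -- r is the value of the continued fraction
  have hrt : r = tl c L 0 := by
    rw [hr, tl]; norm_num
  -- δ agrees with DD
  have hδD : ∀ i, 1 ≤ i → i ≤ L → δ i = DD c L i := by
    intro i h1 h2
    have k := key_formula c q L hc hq0 hq1 hqrec i h2
    rw [hδ i, hrt, round_formula c q L hc hcL hq0 hq1 hqrec (by omega) i h1 h2]
    push_cast
    rw [k, abs_mul, abs_pow, abs_neg, abs_one, one_pow, one_mul,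
      abs_of_nonneg (DD_nonneg c L i)]
  -- basic facts about q
  have hc1 : 1 ≤ c 1 := hc 1 (by omega) (by omega)
  have hqone : ∀ i, 1 ≤ q i := q_ge_one c q hq0 hq1 hqrec hc1
  have hqm_le : q m ≤ q (m+1) := q_mono_step c q L hc hq0 hq1 hqrec m (by omega)
  have hql_le : q (m+1) ≤ q (m+2) := q_mono_step c q L hc hq0 hq1 hqrec (m+1) (by omega)
  have hrecl : q (m+2) = c (m+2) * q (m+1) + q m := hqrec (m+1) (by omega)
  have hrecl2 : q (m+3) = c (m+3) * q (m+2) + q (m+1) := hqrec (m+2) (by omega)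
  have hcM1 : c (m+2) ≤ M := hM (m+2) (by omega) (by omega)
  have hcM2 : c (m+3) ≤ M := hM (m+3) (by omega) (by omega)
  have hub1 : q (m+2) ≤ (M+1) * q (m+1) := by
    rw [hrecl, Nat.succ_mul]
    exact Nat.add_le_add (Nat.mul_le_mul_right _ hcM1) hqm_le
  have hub2 : q (m+3) ≤ (M+1) * q (m+2) := by
    rw [hrecl2, Nat.succ_mul]
    exact Nat.add_le_add (Nat.mul_le_mul_right _ hcM2) hql_le
  have hM1 : 1 ≤ M := le_trans hc1 (hM 1 (by omega) (by omega))
  -- DD facts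
  have hD1 : 0 < DD c L (m+1) := DD_pos c L (m+1) hc (by omega)
  have hD2 : 0 < DD c L (m+2) := DD_pos c L (m+2) hc (by omega)
  have hD3nn : 0 ≤ DD c L (m+3) := DD_nonneg c L _
  have hD32 : DD c L (m+3) ≤ DD c L (m+2) := DD_anti c L hc (by omega)
  have hone1 : (q (m+2) : ℝ) * DD c L (m+1) + (q (m+1) : ℝ) * DD c L (m+2) = 1 :=
    one_formula c q L hc hq0 hq1 hqrec (m+1) (by omega)
  have hone2 : (q (m+3) : ℝ) * DD c L (m+2) + (q (m+2) : ℝ) * DD c L (m+3) = 1 :=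
    one_formula c q L hc hq0 hq1 hqrec (m+2) (by omega)
  have hstrict : DD c L (m+2) < DD c L (m+1) := by
    have hrecD : DD c L (m+3) = DD c L (m+1) - (c (m+3) : ℝ) * DD c L (m+2) :=
      DD_rec c L hc (i := m+2) (by omega) (by omega)
    rcases lt_or_eq_of_le (show m+3 ≤ L by omega) with hlt | heq
    · have hp : 0 < DD c L (m+3) := DD_pos c L (m+3) hc hlt
      have hc3 : (1:ℝ) ≤ (c (m+3) : ℝ) := by
        exact_mod_cast hc (m+3) (by omega) (by omega)
      nlinarith only [hrecD, hp, hc3, hD2, mul_nonneg (sub_nonneg.mpr hc3) hD2.le]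
    · have hc3 : (2:ℝ) ≤ (c (m+3) : ℝ) := by
        rw [← heq] at hcL; exact_mod_cast hcL
      nlinarith only [hrecD, hD3nn, hc3, hD2, mul_nonneg (sub_nonneg.mpr hc3) hD2.le]
  -- cast facts
  have hQpos : (0:ℝ) < (q (m+1) : ℝ) := by exact_mod_cast hqone (m+1)
  have hqmnn : (0:ℝ) ≤ (q m : ℝ) := Nat.cast_nonneg _
  have hub1R : (q (m+2) : ℝ) ≤ ((M:ℝ)+1) * (q (m+1) : ℝ) := by exact_mod_cast hub1
  have hub2R : (q (m+3) : ℝ) ≤ ((M:ℝ)+1) * (q (m+2) : ℝ) := by exact_mod_cast hub2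
  have hqleR : (q (m+1) : ℝ) ≤ (q (m+2) : ℝ) := by exact_mod_cast hql_le
  have hqmleR : (q m : ℝ) ≤ (q (m+1) : ℝ) := by exact_mod_cast hqm_le
  have hrecR : (q (m+2) : ℝ) = (c (m+2) : ℝ) * (q (m+1) : ℝ) + (q m : ℝ) := by
    exact_mod_cast hrecl
  have hMR : (1:ℝ) ≤ (M:ℝ) := by exact_mod_cast hM1
  -- lambda bounds
  have hlam_pos : 0 < (q (m+1) : ℝ) * DD c L (m+1) := mul_pos hQpos hD1
  have hlam_lb : 1 / ((M:ℝ)+2) < (q (m+1) : ℝ) * DD c L (m+1) := by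
    rw [div_lt_iff₀ (by positivity)]
    have h1 : (q (m+1) : ℝ) * DD c L (m+2) < (q (m+1) : ℝ) * DD c L (m+1) :=
      mul_lt_mul_of_pos_left hstrict hQpos
    have h2 : (q (m+2) : ℝ) * DD c L (m+1) ≤ (((M:ℝ)+1) * (q (m+1) : ℝ)) * DD c L (m+1) :=
      mul_le_mul_of_nonneg_right hub1R hD1.le
    linarith only [hone1, h1, h2]
  have hq1D2 : (q (m+1) : ℝ) * DD c L (m+2) ≤ 1 - (q (m+1) : ℝ) * DD c L (m+1) := by
    have h3 : (q (m+1) : ℝ) * DD c L (m+1) ≤ (q (m+2) : ℝ) * DD c L (m+1) :=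
      mul_le_mul_of_nonneg_right hqleR hD1.le
    linarith only [hone1, h3]
  have hgap : 1 / (((M:ℝ)+2)^2) ≤ 1 - (q (m+1) : ℝ) * DD c L (m+1) := by
    rw [div_le_iff₀ (by positivity)]
    have g1 : (q (m+3) : ℝ) * DD c L (m+2) ≤ (((M:ℝ)+1) * (q (m+2) : ℝ)) * DD c L (m+2) :=
      mul_le_mul_of_nonneg_right hub2R hD2.le
    have g2 : (q (m+2) : ℝ) * DD c L (m+3) ≤ (q (m+2) : ℝ) * DD c L (m+2) :=
      mul_le_mul_of_nonneg_left hD32 (by positivity)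
    have e1 : (1:ℝ) ≤ ((M:ℝ)+2) * ((q (m+2) : ℝ) * DD c L (m+2)) := by linarith only [hone2, g1, g2]
    have e2 : (q (m+2) : ℝ) * DD c L (m+2) ≤ ((M:ℝ)+1) * ((q (m+1) : ℝ) * DD c L (m+2)) := by
      linarith only [mul_le_mul_of_nonneg_right hub1R hD2.le]
    have e3 : (1:ℝ) ≤ ((M:ℝ)+2) * (((M:ℝ)+1) * ((q (m+1) : ℝ) * DD c L (m+2))) := by
      linarith only [e1, mul_le_mul_of_nonneg_left e2 (show (0:ℝ) ≤ (M:ℝ)+2 by positivity)]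
    have hq1D2nn : (0:ℝ) ≤ (q (m+1) : ℝ) * DD c L (m+2) := by positivity
    have e4 : ((M:ℝ)+1) * ((q (m+1) : ℝ) * DD c L (m+2))
        ≤ ((M:ℝ)+2) * ((q (m+1) : ℝ) * DD c L (m+2)) :=
      mul_le_mul_of_nonneg_right (by linarith only []) hq1D2nn
    have e5 := mul_le_mul_of_nonneg_left e4 (show (0:ℝ) ≤ (M:ℝ)+2 by positivity)
    have e6 : ((M:ℝ)+2) * (((M:ℝ)+2) * ((q (m+1) : ℝ) * DD c L (m+2)))
        ≤ ((M:ℝ)+2) * (((M:ℝ)+2) * (1 - (q (m+1) : ℝ) * DD c L (m+1))) :=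
      mul_le_mul_of_nonneg_left (mul_le_mul_of_nonneg_left hq1D2 (by positivity)) (by positivity)
    linarith only [e3, e5, e6]
  -- the alternating sum bounds
  have hSb := S_bound c L b (m+1) (L-1-(m+1)) hc (by omega) (by omega)
      (fun j hj => hble ((m+1)+j) (by omega)) (L-1-(m+1)) 1 (by omega) (by omega)
  obtain ⟨hSu, hSl⟩ := hSb
  rw [pow_one] at hSu hSl
  have hS2 : (∑ j ∈ Icc 1 (L-1-(m+1)), (-1:ℝ)^j * (b ((m+1)+j) : ℝ) * DD c L ((m+1)+j))
      ≤ DD c L (m+2) := by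
    have h := hSl
    rw [show (m+1) + 1 = m + 2 from rfl] at h
    linarith only [h]
  have hS1 : -(DD c L (m+1)) ≤
      (∑ j ∈ Icc 1 (L-1-(m+1)), (-1:ℝ)^j * (b ((m+1)+j) : ℝ) * DD c L ((m+1)+j)) := by
    have h := hSu
    rw [show (m+1) + 1 - 1 = m + 1 from rfl] at h
    linarith only [h]
  -- rewrite δ to DD in the goal
  have hsum_eq : (∑ j ∈ Icc 1 (L-1-(m+1)), (-1:ℝ)^j * (b ((m+1)+j) : ℝ) * δ ((m+1)+j))
      = ∑ j ∈ Icc 1 (L-1-(m+1)), (-1:ℝ)^j * (b ((m+1)+j) : ℝ) * DD c L ((m+1)+j) := by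
    refine Finset.sum_congr rfl (fun j hj => ?_)
    rw [Finset.mem_Icc] at hj
    rw [hδD ((m+1)+j) (by omega) (by omega)]
  rw [hδD (m+1) (by omega) (by omega), hsum_eq]
  -- abbreviations
  set D1 := DD c L (m+1) with hD1def
  set D2 := DD c L (m+2) with hD2def
  set Q : ℝ := (q (m+1) : ℝ) with hQdef
  set S := ∑ j ∈ Icc 1 (L-1-(m+1)), (-1:ℝ)^j * (b ((m+1)+j) : ℝ) * DD c L ((m+1)+j) with hSdef
  set ν : ℝ := (n : ℝ) with hνdef
  set f := Int.fract (ν * ((q m : ℝ) / Q)) with hfdef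
  have hν1 : (1:ℝ) ≤ ν := by rw [hνdef]; exact_mod_cast hn
  have hνpos : (0:ℝ) < ν := by linarith only [hν1]
  have hf0 : 0 ≤ f := Int.fract_nonneg _
  have hf1 : f < 1 := Int.fract_lt_one _
  have hfle : f ≤ ν * ((q m : ℝ) / Q) := by
    have hx : 0 ≤ ν * ((q m : ℝ) / Q) := by positivity
    have hfl : (0:ℝ) ≤ (⌊ν * ((q m : ℝ) / Q)⌋ : ℝ) := by
      exact_mod_cast Int.floor_nonneg.mpr hx
    rw [hfdef, ← Int.self_sub_floor]
    linarith only [hfl]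
  have htlam : ((q m : ℝ) / Q) * (Q * D1) = (q m : ℝ) * D1 := by
    field_simp
  -- bounds on the perturbation
  have hsleR : (s:ℝ) ≤ (c (m+2) : ℝ) - 1 := by
    have h1 : s + 1 ≤ c (m+2) := le_trans hs (hble (m+1) (by omega))
    have h2 : ((s:ℝ)) + 1 ≤ (c (m+2) : ℝ) := by exact_mod_cast h1
    linarith only [h2]
  have hsnn : (0:ℝ) ≤ (s:ℝ) := Nat.cast_nonneg _
  have hεub : Q * ((s:ℝ) * D1 + S) + (Q * D1)/2 ≤ 1 - (Q * D1)/2 - (q m : ℝ) * D1 := by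
    have p1 : Q * S ≤ Q * D2 := mul_le_mul_of_nonneg_left hS2 hQpos.le
    have p2 : (s:ℝ) * D1 ≤ ((c (m+2) : ℝ) - 1) * D1 :=
      mul_le_mul_of_nonneg_right hsleR hD1.le
    have p3 : Q * ((s:ℝ) * D1) ≤ Q * (((c (m+2) : ℝ) - 1) * D1) :=
      mul_le_mul_of_nonneg_left p2 hQpos.le
    have p4 : (q (m+2) : ℝ) * D1 = ((c (m+2) : ℝ) * Q + (q m : ℝ)) * D1 := by
      rw [hrecR]
    linarith only [hone1, p1, p3, p4]
  have hεlb : -(Q * D1) ≤ Q * ((s:ℝ) * D1 + S) := by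
    have p5 : Q * (-(D1)) ≤ Q * S := mul_le_mul_of_nonneg_left hS1 hQpos.le
    have p6 : (0:ℝ) ≤ Q * ((s:ℝ) * D1) := by positivity
    linarith only [p5, p6]
  -- names for the two factors
  set A := 1 - Q * D1 * ((f - 1/2)/ν) with hAdef
  set B := (Q * ((s:ℝ) * D1 + S) + (Q * D1)/2)/ν with hBdef
  clear_value D1 D2 Q S ν f A B
  have hG : A^2
      - (Q * ((s:ℝ) * D1 + S) + (Q * D1)/2)^2 / ν^2 = (A - B) * (A + B) := by
    rw [hAdef, hBdef]
    ring
  rw [hG]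
  -- lower bound for A + B
  have hApB : 1 - Q * D1 ≤ A + B := by
    have hlf : Q * D1 * f ≤ Q * D1 := by
      have := mul_le_mul_of_nonneg_left hf1.le hlam_pos.le
      linarith only [this]
    have hnum2 : -(Q * D1) ≤ Q * ((s:ℝ) * D1 + S) + (Q * D1)/2 - Q * D1 * (f - 1/2) := by
      linarith only [hεlb, hlf]
    have d1 : (-(Q * D1))/ν ≤ (Q * ((s:ℝ) * D1 + S) + (Q * D1)/2 - Q * D1 * (f - 1/2))/ν :=
      (div_le_div_iff_of_pos_right hνpos).mpr hnum2
    have d2 : -(Q * D1) ≤ (-(Q * D1))/ν := by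
      have := div_le_self hlam_pos.le hν1
      rw [neg_div]
      linarith only [this, hlam_pos]
    have hABeq : A + B = 1 + (Q * ((s:ℝ) * D1 + S) + (Q * D1)/2 - Q * D1 * (f - 1/2))/ν := by
      rw [hAdef, hBdef]; ring
    rw [hABeq]
    linarith only [d1, d2]
  have hApBnn : (0:ℝ) ≤ 1 - Q * D1 := by
    have : (0:ℝ) < 1 / (((M:ℝ)+2)^2) := by positivity
    linarith only [this, hgap]
  -- final split on n
  rcases eq_or_lt_of_le hn with hn1 | hn2
  · -- n = 1
    have hνeq : ν = 1 := by rw [hνdef, ← hn1]; norm_num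
    have hAmB : Q * D1 ≤ A - B := by
      have hlf : Q * D1 * f ≤ (q m : ℝ) * D1 := by
        have h1 : Q * D1 * f ≤ Q * D1 * (ν * ((q m : ℝ)/Q)) :=
          mul_le_mul_of_nonneg_left hfle hlam_pos.le
        rw [hνeq, one_mul] at h1
        calc Q * D1 * f ≤ Q * D1 * ((q m : ℝ)/Q) := h1
          _ = ((q m : ℝ)/Q) * (Q * D1) := by ring
          _ = (q m : ℝ) * D1 := htlam
      have hABeq2 : A - B = 1 - Q * D1 * (f - 1/2) - (Q * ((s:ℝ) * D1 + S) + (Q * D1)/2) := by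
        rw [hAdef, hBdef, hνeq]; ring
      rw [hABeq2]
      linarith only [hεub, hlf]
    have hprod : (Q * D1) * (1 - Q * D1) ≤ (A - B) * (A + B) := by
      apply mul_le_mul hAmB hApB hApBnn
      linarith only [hlam_pos, hAmB]
    have hfin : 1 / ((M:ℝ)+2)^3 < (Q * D1) * (1 - Q * D1) := by
      rw [div_lt_iff₀ (by positivity)]
      have hX : 1 < Q * D1 * ((M:ℝ)+2) := by
        rw [div_lt_iff₀ (by positivity)] at hlam_lb
        linarith only [hlam_lb]
      have hY : 1 ≤ (1 - Q * D1) * (((M:ℝ)+2)^2) := by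
        rw [div_le_iff₀ (by positivity)] at hgap
        linarith only [hgap]
      have hZ : (0:ℝ) < (1 - Q * D1) * (((M:ℝ)+2)^2) := lt_of_lt_of_le one_pos hY
      have hmul := mul_lt_mul_of_pos_right hX hZ
      linarith only [hmul, hY]
    exact lt_of_lt_of_le hfin hprod
  · -- 2 ≤ n
    have hν2 : (2:ℝ) ≤ ν := by rw [hνdef]; exact_mod_cast hn2
    have hAmB : (1:ℝ)/2 ≤ A - B := by
      have hlf : Q * D1 * f ≤ Q * D1 := by
        have := mul_le_mul_of_nonneg_left hf1.le hlam_pos.le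
        linarith only [this]
      have hqmD1 : (0:ℝ) ≤ (q m : ℝ) * D1 := mul_nonneg hqmnn hD1.le
      have hnum1 : Q * D1 * (f - 1/2) + (Q * ((s:ℝ) * D1 + S) + (Q * D1)/2) ≤ 1 := by
        linarith only [hεub, hlf, hqmD1]
      have d1 : (Q * D1 * (f - 1/2) + (Q * ((s:ℝ) * D1 + S) + (Q * D1)/2))/ν ≤ 1/ν :=
        (div_le_div_iff_of_pos_right hνpos).mpr hnum1
      have d2 : (1:ℝ)/ν ≤ 1/2 := by
        rw [div_le_div_iff₀ hνpos (by norm_num)]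
        linarith only [hν2]
      have hABeq2 : A - B
          = 1 - (Q * D1 * (f - 1/2) + (Q * ((s:ℝ) * D1 + S) + (Q * D1)/2))/ν := by
        rw [hAdef, hBdef]; ring
      rw [hABeq2]
      linarith only [d1, d2]
    have hprod : (1/2 : ℝ) * (1 - Q * D1) ≤ (A - B) * (A + B) := by
      apply mul_le_mul hAmB hApB hApBnn
      linarith only [hAmB]
    have hfin : 1 / ((M:ℝ)+2)^3 < (1/2 : ℝ) * (1 - Q * D1) := by
      rw [div_lt_iff₀ (by positivity)]
      have hY : 1 ≤ (1 - Q * D1) * (((M:ℝ)+2)^2) := by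
        rw [div_le_iff₀ (by positivity)] at hgap
        linarith only [hgap]
      have hmul := mul_le_mul_of_nonneg_right hY
        (show (0:ℝ) ≤ ((M:ℝ)+2)/2 by positivity)
      linarith only [hmul, hMR]
    exact lt_of_lt_of_le hfin hprod
end
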